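/- arXiv:2205.02027 — 7 statements merged into one kernel-verified Lean document; each statement's English description precedes it below -/
import Mathlib

section
/- For each real α ∈ (0,1], the sequence n ↦ (binom(n + ⌈αn⌉, ⌈αn⌉))^(1/n) converges to (1+α)^(1+α)/α^α as n → ∞. -/
open Filter

open Finset

private def T (n k j : ℕ) : ℕ := (n+k).choose j * n^j * k^(n+k-j)

private lemma term_up (n k j : ℕ) (hj : j < n) : T n k j ≤ T n k (j+1) := by
  unfold T
  have hsub : n + k - j = (n + k - (j+1)) + 1 := by omega
  have key : (j+1) * k ≤ (n + k - j) * n := by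
    have h1 : j + 1 ≤ n := hj
    have h2 : k ≤ n + k - j := by omega
    calc (j+1) * k ≤ n * (n + k - j) := Nat.mul_le_mul h1 h2
    _ = (n + k - j) * n := Nat.mul_comm _ _
  have hc : (n+k).choose (j+1) * (j+1) = (n+k).choose j * (n + k - j) :=
    Nat.choose_succ_right_eq _ _
  apply Nat.le_of_mul_le_mul_right _ (Nat.succ_pos j)
  calc (n+k).choose j * n^j * k^(n+k-j) * (j+1)
      = ((n+k).choose j * n^j * k^(n+k-(j+1))) * ((j+1) * k) := by
        rw [hsub]; ring
    _ ≤ ((n+k).choose j * n^j * k^(n+k-(j+1))) * ((n + k - j) * n) :=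
        Nat.mul_le_mul_left _ key
    _ = ((n+k).choose j * (n + k - j)) * n^(j+1) * k^(n+k-(j+1)) := by ring
    _ = ((n+k).choose (j+1) * (j+1)) * n^(j+1) * k^(n+k-(j+1)) := by rw [hc]
    _ = (n+k).choose (j+1) * n^(j+1) * k^(n+k-(j+1)) * (j+1) := by ring

private lemma term_down (n k j : ℕ) (hj : n ≤ j) : T n k (j+1) ≤ T n k j := by
  unfold T
  by_cases hjm : j < n + k
  · have hsub : n + k - j = (n + k - (j+1)) + 1 := by omega
    have key : (n + k - j) * n ≤ (j+1) * k := by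
      have h2 : n + k - j ≤ k := by omega
      calc (n + k - j) * n ≤ k * (j+1) := Nat.mul_le_mul h2 (by omega)
      _ = (j+1) * k := Nat.mul_comm _ _
    have hc : (n+k).choose (j+1) * (j+1) = (n+k).choose j * (n + k - j) :=
      Nat.choose_succ_right_eq _ _
    apply Nat.le_of_mul_le_mul_right _ (Nat.succ_pos j)
    calc (n+k).choose (j+1) * n^(j+1) * k^(n+k-(j+1)) * (j+1)
        = ((n+k).choose (j+1) * (j+1)) * n^(j+1) * k^(n+k-(j+1)) := by ring
      _ = ((n+k).choose j * (n + k - j)) * n^(j+1) * k^(n+k-(j+1)) := by rw [hc]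
      _ = ((n+k).choose j * n^j * k^(n+k-(j+1))) * ((n + k - j) * n) := by ring
      _ ≤ ((n+k).choose j * n^j * k^(n+k-(j+1))) * ((j+1) * k) :=
          Nat.mul_le_mul_left _ key
      _ = (n+k).choose j * n^j * k^(n+k-j) * (j+1) := by rw [hsub]; ring
  · have : (n+k).choose (j+1) = 0 := Nat.choose_eq_zero_of_lt (by omega)
    simp [this]

private lemma term_le (n k j : ℕ) : T n k j ≤ T n k n := by
  rcases le_or_gt j n with h | h
  · have hup : ∀ d, T n k (n - d) ≤ T n k n := by
      intro d
      induction d with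
      | zero => simp
      | succ d ih =>
        rcases le_or_gt n d with hd | hd
        · have : n - (d+1) = n - d := by omega
          rw [this]; exact ih
        · have h1 : n - (d+1) < n := by omega
          have h2 : n - (d+1) + 1 = n - d := by omega
          exact le_trans (h2 ▸ term_up n k (n - (d+1)) h1) ih
    have := hup (n - j)
    rwa [Nat.sub_sub_self h] at this
  · have hdn : ∀ d, T n k (n + d) ≤ T n k n := by
      intro d
      induction d with
      | zero => simp
      | succ d ih => exact le_trans (term_down n k (n+d) (by omega)) ih
    have := hdn (j - n)
    rwa [Nat.add_sub_cancel' (le_of_lt h)] at this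

private lemma nat_lower (n k : ℕ) :
    (n+k).choose n * n^n * k^k ≤ (n+k)^(n+k) := by
  have hk : n + k - n = k := by omega
  rw [add_pow n k (n+k)]
  have hmem : n ∈ Finset.range (n+k+1) := Finset.mem_range.mpr (by omega)
  calc (n+k).choose n * n^n * k^k = n^n * k^(n+k-n) * (n+k).choose n := by rw [hk]; ring
    _ ≤ ∑ j ∈ Finset.range (n+k+1), n^j * k^(n+k-j) * (n+k).choose j :=
        Finset.single_le_sum (f := fun j => n^j * k^(n+k-j) * (n+k).choose j) (fun i _ => Nat.zero_le _) hmem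

private lemma nat_upper (n k : ℕ) :
    (n+k)^(n+k) ≤ (n+k+1) * ((n+k).choose n * n^n * k^k) := by
  have hk : n + k - n = k := by omega
  rw [add_pow n k (n+k)]
  calc ∑ j ∈ Finset.range (n+k+1), n^j * k^(n+k-j) * (n+k).choose j
      ≤ ∑ _j ∈ Finset.range (n+k+1), (n+k).choose n * n^n * k^k := by
        apply Finset.sum_le_sum
        intro j _
        have := term_le n k j
        unfold T at this
        rw [hk] at this
        calc n^j * k^(n+k-j) * (n+k).choose j = (n+k).choose j * n^j * k^(n+k-j) := by ring
          _ ≤ _ := this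
    _ = (n+k+1) * ((n+k).choose n * n^n * k^k) := by
        rw [Finset.sum_const, Finset.card_range, smul_eq_mul]

open Filter Real

private noncomputable def gfun (x : ℝ) : ℝ := (1+x) ^ (1+x) / x ^ x

private lemma rpow_key (a b : ℝ) (ha : 0 < a) (hb : 0 < b) :
    ((a+b) ^ (a+b) / (a ^ a * b ^ b)) ^ (1/a) = gfun (b/a) := by
  unfold gfun
  have ha' : a ≠ 0 := ne_of_gt ha
  have hab : (0:ℝ) < a + b := by linarith
  have hr : 0 < b / a := div_pos hb ha
  have hab' : a + b = a * (1 + b/a) := by field_simp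
  have hb' : b = a * (b/a) := by field_simp
  rw [Real.div_rpow (by positivity) (by positivity),
      Real.mul_rpow (by positivity) (by positivity),
      ← Real.rpow_mul (le_of_lt hab), ← Real.rpow_mul (le_of_lt ha),
      ← Real.rpow_mul (le_of_lt hb)]
  have e1 : (a+b) * (1/a) = 1 + b/a := by field_simp
  have e2 : a * (1/a) = 1 := by field_simp
  have e3 : b * (1/a) = b/a := by field_simp
  rw [e1, e2, e3, Real.rpow_one]
  nth_rewrite 1 [hab']
  nth_rewrite 3 [hb']
  rw [Real.mul_rpow (le_of_lt ha) (by positivity),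
      Real.mul_rpow (le_of_lt ha) hr.le]
  rw [Real.rpow_add ha 1 (b/a), Real.rpow_one]
  have h1 : (0:ℝ) < a ^ (b/a) := Real.rpow_pos_of_pos ha _
  have h2 : (0:ℝ) < (b/a) ^ (b/a) := Real.rpow_pos_of_pos hr _
  field_simp
private lemma hr_tendsto (α : ℝ) (hα0 : 0 < α) :
    Tendsto (fun n : ℕ => (⌈α * (n:ℝ)⌉₊ : ℝ) / n) atTop (nhds α) := by
  apply tendsto_of_tendsto_of_tendsto_of_le_of_le'
    (tendsto_const_nhds) (g := fun _ => α) (h := fun n : ℕ => α + 1/(n:ℝ))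
  · have : Tendsto (fun n : ℕ => α + 1/(n:ℝ)) atTop (nhds (α + 0)) :=
      tendsto_const_nhds.add tendsto_one_div_atTop_nhds_zero_nat
    simpa using this
  · filter_upwards [eventually_ge_atTop 1] with n hn
    have hn' : (0:ℝ) < n := by exact_mod_cast hn
    rw [le_div_iff₀ hn']
    exact Nat.le_ceil _
  · filter_upwards [eventually_ge_atTop 1] with n hn
    have hn' : (0:ℝ) < n := by exact_mod_cast hn
    rw [div_le_iff₀ hn']
    have h1 : (⌈α * (n:ℝ)⌉₊ : ℝ) < α * n + 1 :=
      Nat.ceil_lt_add_one (by positivity)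
    have : (α + 1/(n:ℝ)) * n = α * n + 1 := by field_simp
    linarith

private lemma h4_tendsto :
    Tendsto (fun n : ℕ => ((4 * n : ℝ)) ^ (1/(n:ℝ))) atTop (nhds 1) := by
  have heq : ∀ n : ℕ, ((4 * n : ℝ)) ^ (1/(n:ℝ))
      = (4:ℝ) ^ (1/(n:ℝ)) * (n:ℝ) ^ (1/(n:ℝ)) := fun n =>
    Real.mul_rpow (by norm_num) (Nat.cast_nonneg n)
  simp only [heq]
  have h1 : Tendsto (fun n : ℕ => (4:ℝ) ^ (1/(n:ℝ))) atTop (nhds 1) := by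
    have := (tendsto_const_nhds (x := (4:ℝ)) (f := atTop (α := ℕ))).rpow
      tendsto_one_div_atTop_nhds_zero_nat (Or.inl (by norm_num))
    simpa using this
  have h2 : Tendsto (fun n : ℕ => (n:ℝ) ^ (1/(n:ℝ))) atTop (nhds 1) :=
    tendsto_rpow_div.comp tendsto_natCast_atTop_atTop
  simpa using h1.mul h2

private lemma g_cont (α : ℝ) (hα0 : 0 < α) : ContinuousAt gfun α := by
  unfold gfun
  apply ContinuousAt.div
  · exact ((continuous_const.add continuous_id).continuousAt).rpow
      ((continuous_const.add continuous_id).continuousAt) (Or.inl (by intro h; simp at h; linarith))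
  · exact (continuous_id.continuousAt).rpow (continuous_id.continuousAt) (Or.inl (ne_of_gt hα0))
  · exact ne_of_gt (Real.rpow_pos_of_pos hα0 α)

private lemma bound_eq (n k : ℕ) (hn : 0 < n) (hk : 0 < k) :
    ((((n:ℝ)+(k:ℝ))^((n+k : ℕ))) / ((n:ℝ)^(n:ℕ) * (k:ℝ)^(k:ℕ))) ^ (1/(n:ℝ))
      = gfun ((k:ℝ)/(n:ℝ)) := by
  have hn' : (0:ℝ) < n := by exact_mod_cast hn
  have hk' : (0:ℝ) < k := by exact_mod_cast hk
  rw [← rpow_key (n:ℝ) (k:ℝ) hn' hk',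
      ← Real.rpow_natCast ((n:ℝ)+(k:ℝ)) (n+k),
      ← Real.rpow_natCast (n:ℝ) n, ← Real.rpow_natCast (k:ℝ) k]
  push_cast
  ring_nf

/-- For each real `α ∈ (0,1]`, the sequence
`n ↦ (binom(n + ⌈αn⌉, ⌈αn⌉))^(1/n)` converges to `(1+α)^(1+α)/α^α`. -/
theorem stmt0 (α : ℝ) (hα0 : 0 < α) (hα1 : α ≤ 1) :
    Tendsto
      (fun n : ℕ =>
        (((n + ⌈α * (n : ℝ)⌉₊).choose ⌈α * (n : ℝ)⌉₊ : ℝ)) ^ (1 / (n : ℝ)))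
      atTop (nhds ((1 + α) ^ (1 + α) / α ^ α)) := by
  have hL : (1 + α) ^ (1 + α) / α ^ α = gfun α := rfl
  rw [hL]
  have hg : Tendsto (fun n : ℕ => gfun ((⌈α * (n:ℝ)⌉₊ : ℝ) / n)) atTop (nhds (gfun α)) :=
    (g_cont α hα0).tendsto.comp (hr_tendsto α hα0)
  apply tendsto_of_tendsto_of_tendsto_of_le_of_le'
    (g := fun n : ℕ => gfun ((⌈α * (n:ℝ)⌉₊ : ℝ) / n) / ((4 * n : ℝ)) ^ (1/(n:ℝ)))
    (h := fun n : ℕ => gfun ((⌈α * (n:ℝ)⌉₊ : ℝ) / n))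
  · simpa [Pi.div_def] using hg.div h4_tendsto one_ne_zero
  · exact hg
  · -- lower bound
    filter_upwards [eventually_ge_atTop 1] with n hn
    set k := ⌈α * (n:ℝ)⌉₊ with hkdef
    have hn0 : 0 < n := hn
    have hn' : (0:ℝ) < n := by exact_mod_cast hn0
    have hk0 : 0 < k := Nat.ceil_pos.mpr (by positivity)
    have hk' : (0:ℝ) < k := by exact_mod_cast hk0
    have hx : α * (n:ℝ) ≤ (n:ℝ) := by nlinarith [hn']
    have hkn : k ≤ n := by
      rw [hkdef]
      exact Nat.ceil_le.mpr hx
    have h41 : n + k + 1 ≤ 4 * n := by omega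
    have h0 : (n+k)^(n+k) ≤ (4*n) * ((n+k).choose k * n^n * k^k) := by
      calc (n+k)^(n+k) ≤ (n+k+1) * ((n+k).choose n * n^n * k^k) := nat_upper n k
        _ = (n+k+1) * ((n+k).choose k * n^n * k^k) := by rw [Nat.choose_symm_add]
        _ ≤ (4*n) * ((n+k).choose k * n^n * k^k) := Nat.mul_le_mul_right _ h41
    have hc : ((n:ℝ)+(k:ℝ))^((n+k : ℕ)) ≤ (4*(n:ℝ)) * (((n+k).choose k : ℝ) * (n:ℝ)^(n:ℕ) * (k:ℝ)^(k:ℕ)) := by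
      exact_mod_cast h0
    have hdiv : (((n:ℝ)+(k:ℝ))^((n+k : ℕ))) / ((n:ℝ)^(n:ℕ) * (k:ℝ)^(k:ℕ))
        ≤ (4*(n:ℝ)) * ((n+k).choose k : ℝ) := by
      rw [div_le_iff₀ (by positivity)]
      calc ((n:ℝ)+(k:ℝ))^((n+k : ℕ)) ≤ _ := hc
        _ = 4*(n:ℝ) * ((n+k).choose k : ℝ) * ((n:ℝ)^(n:ℕ) * (k:ℝ)^(k:ℕ)) := by ring
    have hmono := Real.rpow_le_rpow (by positivity) hdiv (by positivity : (0:ℝ) ≤ 1/(n:ℝ))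
    rw [bound_eq n k hn0 hk0] at hmono
    rw [Real.mul_rpow (by positivity) (Nat.cast_nonneg _)] at hmono
    rw [div_le_iff₀ (by positivity)]
    calc gfun ((k:ℝ)/n) ≤ _ := hmono
      _ = (((n + k).choose k : ℝ)) ^ (1/(n:ℝ)) * (4*(n:ℝ)) ^ (1/(n:ℝ)) := by ring
  · -- upper bound
    filter_upwards [eventually_ge_atTop 1] with n hn
    set k := ⌈α * (n:ℝ)⌉₊ with hkdef
    have hn0 : 0 < n := hn
    have hn' : (0:ℝ) < n := by exact_mod_cast hn0
    have hk0 : 0 < k := Nat.ceil_pos.mpr (by positivity)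
    have hk' : (0:ℝ) < k := by exact_mod_cast hk0
    have h0 : (n+k).choose k * n^n * k^k ≤ (n+k)^(n+k) := by
      rw [← Nat.choose_symm_add]; exact nat_lower n k
    have hc : ((n+k).choose k : ℝ) * ((n:ℝ)^(n:ℕ) * (k:ℝ)^(k:ℕ)) ≤ ((n:ℝ)+(k:ℝ))^((n+k : ℕ)) := by
      have h1 : (((n+k).choose k * n^n * k^k : ℕ) : ℝ) ≤ (((n+k)^(n+k) : ℕ) : ℝ) := by
        exact_mod_cast h0
      push_cast at h1
      linarith [h1]
    have hdiv : ((n+k).choose k : ℝ) ≤ (((n:ℝ)+(k:ℝ))^((n+k : ℕ))) / ((n:ℝ)^(n:ℕ) * (k:ℝ)^(k:ℕ)) :=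
      (le_div_iff₀ (by positivity)).mpr hc
    have hmono := Real.rpow_le_rpow (Nat.cast_nonneg _) hdiv (by positivity : (0:ℝ) ≤ 1/(n:ℝ))
    rwa [bound_eq n k hn0 hk0] at hmono
end

section
/- If f : ℕ → ℝ_{>0} satisfies f(n)/n → 0 as n → ∞, then (binom(n + ⌈f(n)⌉, ⌈f(n)⌉))^(1/n) → 1 as n → ∞; i.e., the sequence binom(n+⌈f(n)⌉, ⌈f(n)⌉) grows subexponentially. -/
open Filter

lemma choose_mul_le_aux (n k : ℕ) :
    (n + k).choose k * (k ^ k * n ^ n) ≤ (n + k) ^ (n + k) := by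
  have hpow : (k + n) ^ (n + k) =
      ∑ i ∈ Finset.range (n + k + 1), k ^ i * n ^ (n + k - i) * (n + k).choose i :=
    add_pow k n (n + k)
  have hmem : k ∈ Finset.range (n + k + 1) := by
    simp [Nat.lt_succ_iff]
  have hle : k ^ k * n ^ (n + k - k) * (n + k).choose k ≤
      ∑ i ∈ Finset.range (n + k + 1), k ^ i * n ^ (n + k - i) * (n + k).choose i :=
    Finset.single_le_sum (f := fun i => k ^ i * n ^ (n + k - i) * (n + k).choose i)
      (fun i _ => Nat.zero_le _) hmem
  have hsub : n + k - k = n := by omega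
  rw [hsub] at hle
  calc (n + k).choose k * (k ^ k * n ^ n)
      = k ^ k * n ^ n * (n + k).choose k := by ring
    _ ≤ ∑ i ∈ Finset.range (n + k + 1), k ^ i * n ^ (n + k - i) * (n + k).choose i := hle
    _ = (k + n) ^ (n + k) := hpow.symm
    _ = (n + k) ^ (n + k) := by rw [Nat.add_comm]

lemma log_choose_le_aux (n k : ℕ) (hn : 1 ≤ n) (hk : 1 ≤ k) :
    Real.log ((n + k).choose k : ℝ) ≤
      ((n : ℝ) + k) * Real.log ((n : ℝ) + k) - k * Real.log k - n * Real.log n := by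
  have hnR : (0 : ℝ) < n := by exact_mod_cast hn
  have hkR : (0 : ℝ) < k := by exact_mod_cast hk
  have hC : (0 : ℝ) < ((n + k).choose k : ℝ) := by
    exact_mod_cast Nat.choose_pos (Nat.le_add_left k n)
  have hineq : ((n + k).choose k : ℝ) * ((k : ℝ) ^ k * (n : ℝ) ^ n) ≤
      ((n : ℝ) + k) ^ (n + k) := by
    have h' : (((n + k).choose k * (k ^ k * n ^ n) : ℕ) : ℝ) ≤ (((n + k) ^ (n + k) : ℕ) : ℝ) := by
      exact_mod_cast choose_mul_le_aux n k
    push_cast at h'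
    convert h' using 2
  have hlog : Real.log (((n + k).choose k : ℝ) * ((k : ℝ) ^ k * (n : ℝ) ^ n)) ≤
      Real.log (((n : ℝ) + k) ^ (n + k)) :=
    Real.log_le_log (by positivity) hineq
  rw [Real.log_mul (ne_of_gt hC) (by positivity), Real.log_mul (by positivity) (by positivity),
    Real.log_pow, Real.log_pow, Real.log_pow] at hlog
  push_cast at hlog ⊢
  linarith

/-- If `f : ℕ → ℝ_{>0}` satisfies `f(n)/n → 0`, then
`(binom(n + ⌈f(n)⌉, ⌈f(n)⌉))^(1/n) → 1`, i.e. the sequence grows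
subexponentially. -/
theorem stmt2 (f : ℕ → ℝ) (hf : ∀ n, 0 < f n)
    (h : Tendsto (fun n : ℕ => f n / (n : ℝ)) atTop (nhds 0)) :
    Tendsto
      (fun n : ℕ => (((n + ⌈f n⌉₊).choose ⌈f n⌉₊ : ℝ)) ^ (1 / (n : ℝ)))
      atTop (nhds 1) := by
  set k : ℕ → ℕ := fun n => ⌈f n⌉₊ with hkdef
  set t : ℕ → ℝ := fun n => (k n : ℝ) / n with htdef
  have hk1 : ∀ n, 1 ≤ k n := fun n => Nat.one_le_ceil_iff.mpr (hf n)
  -- t → 0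
  have ht0 : Tendsto t atTop (nhds 0) := by
    have hupper : ∀ᶠ n : ℕ in atTop, t n ≤ f n / n + 1 / n := by
      filter_upwards [eventually_gt_atTop 0] with n hn
      have hnR : (0 : ℝ) < n := by exact_mod_cast hn
      have hkle : (k n : ℝ) ≤ f n + 1 := le_of_lt (Nat.ceil_lt_add_one (le_of_lt (hf n)))
      calc t n = (k n : ℝ) / n := rfl
        _ ≤ (f n + 1) / n := by gcongr
        _ = f n / n + 1 / n := by rw [add_div]
    have hlower : ∀ᶠ n : ℕ in atTop, (0 : ℝ) ≤ t n := by
      filter_upwards with n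
      positivity
    have hlim : Tendsto (fun n : ℕ => f n / n + 1 / n) atTop (nhds 0) := by
      have := h.add tendsto_one_div_atTop_nhds_zero_nat
      simpa using this
    exact squeeze_zero' hlower hupper hlim
  -- t eventually positive, so tendsto within Ioi 0
  have htpos : ∀ᶠ n : ℕ in atTop, (0 : ℝ) < t n := by
    filter_upwards [eventually_gt_atTop 0] with n hn
    have hnR : (0 : ℝ) < n := by exact_mod_cast hn
    have : (0 : ℝ) < k n := by exact_mod_cast hk1 n
    positivity
  have htW : Tendsto t atTop (nhdsWithin 0 (Set.Ioi 0)) :=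
    tendsto_nhdsWithin_of_tendsto_nhds_of_eventually_within _ ht0 htpos
  -- g(t) → 0
  have hg1 : Tendsto (fun x : ℝ => (1 + x) * Real.log (1 + x))
      (nhdsWithin 0 (Set.Ioi 0)) (nhds 0) := by
    have h1 : Tendsto (fun x : ℝ => (1 + x) * Real.log (1 + x)) (nhds 0)
        (nhds ((1 + 0) * Real.log (1 + 0))) := by
      apply Tendsto.mul
      · exact (continuous_const.add continuous_id).tendsto 0
      · exact (Real.continuousAt_log (by norm_num)).tendsto.comp
          ((continuous_const.add continuous_id).tendsto 0)
    simpa using h1.mono_left nhdsWithin_le_nhds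
  have hg2 : Tendsto (fun x : ℝ => x * Real.log x) (nhdsWithin 0 (Set.Ioi 0)) (nhds 0) := by
    have h2 := tendsto_log_mul_rpow_nhdsGT_zero (r := 1) one_pos
    refine h2.congr' ?_
    filter_upwards [self_mem_nhdsWithin] with x hx
    rw [Real.rpow_one, mul_comm]
  have hgt : Tendsto (fun n : ℕ => (1 + t n) * Real.log (1 + t n) - t n * Real.log (t n))
      atTop (nhds 0) := by
    have hg : Tendsto (fun x : ℝ => (1 + x) * Real.log (1 + x) - x * Real.log x)
        (nhdsWithin 0 (Set.Ioi 0)) (nhds 0) := by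
      simpa using hg1.sub hg2
    exact hg.comp htW
  -- u n := (1/n) * log C n
  set C : ℕ → ℝ := fun n => ((n + k n).choose (k n) : ℝ) with hCdef
  have hC1 : ∀ n, (1 : ℝ) ≤ C n := by
    intro n
    have : 1 ≤ (n + k n).choose (k n) := Nat.choose_pos (Nat.le_add_left (k n) n)
    simp only [hCdef]
    exact_mod_cast this
  set u : ℕ → ℝ := fun n => (1 / n) * Real.log (C n) with hudef
  have hu0 : Tendsto u atTop (nhds 0) := by
    apply squeeze_zero'
      (g := fun n => (1 + t n) * Real.log (1 + t n) - t n * Real.log (t n))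
    · filter_upwards with n
      have := Real.log_nonneg (hC1 n)
      simp only [hudef]
      positivity
    · filter_upwards [eventually_ge_atTop 1] with n hn
      have hnR : (0 : ℝ) < n := by exact_mod_cast hn
      have hkR : (0 : ℝ) < k n := by exact_mod_cast hk1 n
      have htR : 0 < t n := by simp only [htdef]; positivity
      have e1 : (n : ℝ) + k n = n * (1 + t n) := by
        simp only [htdef]; field_simp
      have e2 : (k n : ℝ) = n * t n := by
        simp only [htdef]; field_simp
      have lhs_eq : Real.log ((n : ℝ) + k n) = Real.log n + Real.log (1 + t n) := by
        rw [e1, Real.log_mul (ne_of_gt hnR) (by positivity)]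
      have lhs_eq2 : Real.log ((k n : ℝ)) = Real.log n + Real.log (t n) := by
        rw [e2, Real.log_mul (ne_of_gt hnR) (ne_of_gt htR)]
      have hmain' : Real.log (C n) ≤ ((n : ℝ) + k n) * (Real.log n + Real.log (1 + t n))
          - (k n : ℝ) * (Real.log n + Real.log (t n)) - n * Real.log n := by
        simp only [hCdef]
        rw [← lhs_eq, ← lhs_eq2]
        exact log_choose_le_aux n (k n) hn (hk1 n)
      calc u n = (1 / n) * Real.log (C n) := rfl
        _ ≤ (1 / n) * (((n : ℝ) + k n) * (Real.log n + Real.log (1 + t n))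
            - (k n : ℝ) * (Real.log n + Real.log (t n)) - n * Real.log n) :=
          mul_le_mul_of_nonneg_left hmain' (by positivity)
        _ = (1 + t n) * Real.log (1 + t n) - t n * Real.log (t n) := by
          rw [e2]; field_simp; ring
    · exact hgt
  -- conclude
  have hfinal : Tendsto (fun n : ℕ => Real.exp (u n)) atTop (nhds 1) := by
    have := Real.continuous_exp.continuousAt.tendsto.comp hu0
    simpa [Function.comp_def] using this
  refine hfinal.congr' ?_
  filter_upwards [eventually_ge_atTop 1] with n hn
  have hCpos : 0 < C n := lt_of_lt_of_le one_pos (hC1 n)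
  rw [Real.rpow_def_of_pos hCpos, hudef]
  ring_nf
end

section
/- Let (b_i)_{i≥1} be a sequence of nonnegative reals such that the partial sums B(n) = Σ_{i=1}^n b_i are subadditive (B(n+m) ≤ B(n)+B(m)) and (1/n)·B(n) → 1 as n → ∞. Then for every m ∈ ℕ_{≥1}, the tail sums Σ_{i = n - ⌊n/m⌋ + 1}^{n} b_i tend to infinity as n → ∞. -/
open Filter

/-- Let `(b_i)` be nonnegative reals whose partial sums `B(n) = Σ_{i=1}^n b_i`
are subadditive and satisfy `B(n)/n → 1`.  Then for every `m ≥ 1` the tail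
sums `Σ_{i = n - ⌊n/m⌋ + 1}^n b_i` tend to infinity. -/
theorem stmt4 (b : ℕ → ℝ) (hb : ∀ i, 0 ≤ b i)
    (hsub : ∀ n m : ℕ,
      (∑ i ∈ Finset.Icc 1 (n + m), b i) ≤
        (∑ i ∈ Finset.Icc 1 n, b i) + (∑ i ∈ Finset.Icc 1 m, b i))
    (hlim : Tendsto (fun n : ℕ => (∑ i ∈ Finset.Icc 1 n, b i) / (n : ℝ))
      atTop (nhds 1)) :
    ∀ m : ℕ, 1 ≤ m →
      Tendsto (fun n : ℕ => ∑ i ∈ Finset.Icc (n - n / m + 1) n, b i)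
        atTop atTop := by
  intro m hm
  set B : ℕ → ℝ := fun n => ∑ i ∈ Finset.Icc 1 n, b i with hBdef
  have hBmono : Monotone B := fun a c hac =>
    Finset.sum_le_sum_of_subset_of_nonneg (Finset.Icc_subset_Icc_right hac)
      (fun i _ _ => hb i)
  have hBnonneg : ∀ n, 0 ≤ B n := fun n => Finset.sum_nonneg fun i _ => hb i
  have hm0 : (0:ℝ) < (m:ℝ) := by exact_mod_cast hm
  set ε : ℝ := 1/(4*(m:ℝ)) with hεdef
  have hε : (0:ℝ) < ε := by positivity
  obtain ⟨N, hN⟩ := (Metric.tendsto_atTop.mp hlim) ε hε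
  set M : ℕ := max N 1 with hMdef
  set C : ℝ := B M with hCdef
  -- tail sum is B n - B (n - n/m)
  have htail : ∀ n : ℕ, (∑ i ∈ Finset.Icc (n - n / m + 1) n, b i)
      = B n - B (n - n/m) := by
    intro n
    have h1 : n - n/m ≤ n := Nat.sub_le _ _
    have key : B (n - n/m) + (∑ i ∈ Finset.Icc (n - n / m + 1) n, b i) = B n := by
      simp only [hBdef]
      rw [show (1:ℕ) = 0 + 1 from rfl, Finset.Icc_add_one_left_eq_Ioc, Finset.Icc_add_one_left_eq_Ioc, zero_add,
        Finset.Icc_add_one_left_eq_Ioc]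
      exact Finset.sum_Ioc_consecutive b (Nat.zero_le _) h1
    linarith
  -- upper bound for all n
  have hub : ∀ n : ℕ, B n ≤ C + n * (1+ε) := by
    intro n
    rcases le_or_gt n M with h | h
    · have h1 := hBmono h
      have h2 : (0:ℝ) ≤ n * (1+ε) := by positivity
      simpa only [hCdef] using by linarith
    · have hn : N ≤ n := le_trans (le_max_left _ _) h.le
      have hd := hN n hn
      rw [Real.dist_eq] at hd
      have hnpos : (0:ℝ) < n := by
        have h1 : 1 ≤ n := le_trans (le_max_right _ _) h.le
        exact_mod_cast h1
      have h1 : B n / n - 1 < ε := lt_of_le_of_lt (le_abs_self _) hd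
      have h2 : B n / n < 1 + ε := by linarith
      have h3 : B n < (1+ε) * n := (div_lt_iff₀ hnpos).mp h2
      have h4 := hBnonneg M
      simp only [hCdef]
      nlinarith
  -- lower bound for n ≥ M
  have hlb : ∀ n : ℕ, M ≤ n → n * (1-ε) ≤ B n := by
    intro n hn
    have hN' : N ≤ n := le_trans (le_max_left _ _) hn
    have hd := hN n hN'
    rw [Real.dist_eq] at hd
    have hnpos : (0:ℝ) < n := by
      have h1 : 1 ≤ n := le_trans (le_max_right _ _) hn
      exact_mod_cast h1
    have h1 : -ε < B n / n - 1 := (abs_lt.mp hd).1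
    have h2 : 1 - ε < B n / n := by linarith
    have h3 : (1-ε) * n < B n := (lt_div_iff₀ hnpos).mp h2
    nlinarith
  -- main estimate
  have hmain : ∀ n : ℕ, M ≤ n →
      (n:ℝ) * (1/(2*(m:ℝ))) - (1 + C) ≤ ∑ i ∈ Finset.Icc (n - n / m + 1) n, b i := by
    intro n hn
    rw [htail n]
    have hdle : n / m ≤ n := Nat.div_le_self n m
    have hcast : ((n - n/m : ℕ) : ℝ) = (n:ℝ) - ((n/m : ℕ) : ℝ) :=
      Nat.cast_sub hdle
    set q : ℝ := ((n/m : ℕ) : ℝ) with hq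
    have hq0 : 0 ≤ q := Nat.cast_nonneg _
    -- floor bound: n < m * (n/m) + m
    have hfloor : (n:ℝ) < (m:ℝ) * q + (m:ℝ) := by
      have h := Nat.div_add_mod n m
      have h' : n % m < m := Nat.mod_lt _ (Nat.lt_of_lt_of_le Nat.zero_lt_one hm)
      have : n < m * (n/m) + m := by omega
      rw [hq]; exact_mod_cast this
    have h1 := hlb n hn
    have h2 := hub (n - n/m)
    rw [hcast] at h2
    have key : (n:ℝ) * (1/(2*(m:ℝ))) + 2*ε*(n:ℝ) ≤ q + 1 := by
      have heq : (n:ℝ) * (1/(2*(m:ℝ))) + 2*ε*(n:ℝ) = (n:ℝ)/(m:ℝ) := by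
        rw [hεdef]; field_simp; ring
      rw [heq, div_le_iff₀ hm0]
      nlinarith [hfloor]
    nlinarith [h1, h2, key, mul_nonneg hq0 hε.le]
  -- conclude
  have hten : Tendsto (fun n : ℕ => (n:ℝ) * (1/(2*(m:ℝ))) - (1 + C)) atTop atTop := by
    apply Filter.tendsto_atTop_add_const_right
    apply Tendsto.atTop_mul_const (by positivity : (0:ℝ) < 1/(2*(m:ℝ)))
    exact tendsto_natCast_atTop_atTop
  apply tendsto_atTop_mono' _ _ hten
  filter_upwards [eventually_ge_atTop M] with n hn
  exact hmain n hn
end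

section
/- Let G be a finitely generated group of exponential word growth with finite generating set S, so that λ = lim_n |B_S(n)|^(1/n) > 1. Then there exists a non-decreasing unbounded function q : ℕ → ℝ_{≥0} with q(n)/n → 0 such that |B_S(n)| / |B_S(n - ⌊q(n)⌋)| → ∞ as n → ∞. -/
open Filter

/-- The ball of radius `n` in the Cayley graph of `G` with respect to the
(symmetrized) generating set `S`. -/
def ball {G : Type*} [Group G] (S : Set G) (n : ℕ) : Set G :=
  {g | ∃ w : List G, w.length ≤ n ∧ (∀ x ∈ w, x ∈ S ∨ x⁻¹ ∈ S) ∧ w.prod = g}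

namespace Stmt5Aux

variable {G : Type*} [Group G]

lemma one_mem_ball (S : Set G) (n : ℕ) : (1:G) ∈ ball S n :=
  ⟨[], by simp, by simp, rfl⟩

open scoped Pointwise in
lemma ball_add_subset (S : Set G) (m n : ℕ) : ball S (m + n) ⊆ ball S m * ball S n := by
  rintro g ⟨w, hw, hx, rfl⟩
  refine ⟨(w.take m).prod, ⟨w.take m, ?_, fun x hx' => hx x (List.mem_of_mem_take hx'), rfl⟩,
    (w.drop m).prod, ⟨w.drop m, ?_, fun x hx' => hx x (List.mem_of_mem_drop hx'), rfl⟩,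
    w.prod_take_mul_prod_drop m⟩
  · simp [List.length_take]
  · simp only [List.length_drop]; omega

open scoped Pointwise in
lemma ball_finite (S : Finset G) (n : ℕ) : (ball (S : Set G) n).Finite := by
  induction n with
  | zero =>
    refine (Set.finite_singleton (1:G)).subset ?_
    rintro g ⟨w, hw, -, rfl⟩
    simp [List.length_eq_zero_iff.1 (Nat.le_zero.1 hw)]
  | succ n ih =>
    have h1 : (ball (S : Set G) 1).Finite := by
      refine ((S.finite_toSet.union S.finite_toSet.inv).union (Set.finite_singleton 1)).subset ?_
      rintro g ⟨w, hw, hx, rfl⟩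
      match w, hw with
      | [], _ => simp
      | [x], _ =>
        rcases hx x (by simp) with h | h
        · exact Or.inl (Or.inl (by simpa using h))
        · exact Or.inl (Or.inr (by simpa using h))
    exact (h1.mul ih).subset (by simpa [Nat.add_comm] using ball_add_subset (S : Set G) 1 n)

lemma ncard_ball_pos (S : Finset G) (n : ℕ) : 0 < (ball (S : Set G) n).ncard :=
  (Set.ncard_pos (ball_finite S n)).2 ⟨1, one_mem_ball _ _⟩

open scoped Pointwise in
lemma ncard_ball_add_le (S : Finset G) (m n : ℕ) :
    (ball (S : Set G) (m + n)).ncard ≤ (ball (S : Set G) m).ncard * (ball (S : Set G) n).ncard := by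
  calc (ball (S : Set G) (m + n)).ncard
      ≤ (ball (S : Set G) m * ball (S : Set G) n).ncard :=
        Set.ncard_le_ncard (ball_add_subset _ m n) ((ball_finite S m).mul (ball_finite S n))
    _ ≤ _ := by
        rw [← Nat.card_coe_set_eq, ← Nat.card_coe_set_eq, ← Nat.card_coe_set_eq]
        exact Set.natCard_mul_le

lemma ncard_ball_mul_le (S : Finset G) (n m : ℕ) :
    (ball (S : Set G) (n * m)).ncard ≤ (ball (S : Set G) n).ncard ^ m := by
  induction m with
  | zero =>
    have : (ball (S : Set G) (n * 0)).ncard ≤ ({(1:G)} : Set G).ncard := by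
      refine Set.ncard_le_ncard ?_ (Set.finite_singleton _)
      rintro g ⟨w, hw, -, rfl⟩
      simp [List.length_eq_zero_iff.1 (Nat.le_zero.1 (by simpa using hw))]
    simpa using this
  | succ m ih =>
    calc (ball (S : Set G) (n * (m + 1))).ncard
        = (ball (S : Set G) (n * m + n)).ncard := by ring_nf
      _ ≤ (ball (S : Set G) (n * m)).ncard * (ball (S : Set G) n).ncard := ncard_ball_add_le S _ _
      _ ≤ (ball (S : Set G) n).ncard ^ m * (ball (S : Set G) n).ncard := Nat.mul_le_mul_right _ ih
      _ = (ball (S : Set G) n).ncard ^ (m + 1) := (pow_succ _ _).symm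

lemma sqrt_nat_tendsto_atTop : Tendsto (fun n : ℕ => Real.sqrt n) atTop atTop := by
  refine tendsto_atTop_atTop_of_monotone (fun m n h => Real.sqrt_le_sqrt (by exact_mod_cast h))
    fun b => ?_
  obtain ⟨n, hn⟩ := exists_nat_ge (b * b)
  refine ⟨n, ?_⟩
  rcases le_or_gt b 0 with hb | hb
  · exact hb.trans (Real.sqrt_nonneg _)
  · calc b = Real.sqrt (b * b) := (Real.sqrt_mul_self hb.le).symm
      _ ≤ Real.sqrt n := Real.sqrt_le_sqrt hn

end Stmt5Aux

open Stmt5Aux in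
/-- Let `G` be a finitely generated group of exponential word growth with
finite generating set `S`, so `λ = lim |B_S(n)|^{1/n} > 1`.  Then there is a
non-decreasing unbounded function `q : ℕ → ℝ_{≥0}` with `q(n)/n → 0` such that
`|B_S(n)|/|B_S(n - ⌊q(n)⌋)| → ∞`. -/
theorem stmt5 {G : Type*} [Group G] (S : Finset G)
    (hSgen : Subgroup.closure (S : Set G) = ⊤)
    (lam : ℝ)
    (hlam : Tendsto (fun n : ℕ => ((ball (S : Set G) n).ncard : ℝ) ^ (1 / (n : ℝ)))
      atTop (nhds lam))
    (hexp : 1 < lam) :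
    ∃ q : ℕ → ℝ, Monotone q ∧ (∀ n, 0 ≤ q n) ∧ Tendsto q atTop atTop ∧
      Tendsto (fun n : ℕ => q n / (n : ℝ)) atTop (nhds 0) ∧
      Tendsto
        (fun n : ℕ => ((ball (S : Set G) n).ncard : ℝ) /
          ((ball (S : Set G) (n - ⌊q n⌋₊)).ncard : ℝ))
        atTop atTop := by
  have hB1 : ∀ n, (1 : ℝ) ≤ ((ball (S : Set G) n).ncard : ℝ) := fun n => by
    exact_mod_cast ncard_ball_pos S n
  have hBpos : ∀ n, (0 : ℝ) < ((ball (S : Set G) n).ncard : ℝ) := fun n =>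
    lt_of_lt_of_le one_pos (hB1 n)
  set L := Real.log lam with hLdef
  have hL : 0 < L := Real.log_pos hexp
  set a : ℕ → ℝ := fun n => Real.log ((ball (S : Set G) n).ncard) with ha
  have ha0 : ∀ n, 0 ≤ a n := fun n => Real.log_nonneg (hB1 n)
  -- convergence of (1/n) * a n to L
  have hloga : Tendsto (fun n : ℕ => (1 / (n : ℝ)) * a n) atTop (nhds L) := by
    have hcont : ContinuousAt Real.log lam := Real.continuousAt_log (by linarith)
    have h := hcont.tendsto.comp hlam
    refine h.congr fun n => ?_
    simp only [Function.comp_apply, ha]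
    rw [Real.log_rpow (hBpos n)]
  -- lower bound : n * L ≤ a n
  have hlow : ∀ n : ℕ, (n : ℝ) * L ≤ a n := by
    intro n
    rcases Nat.eq_zero_or_pos n with rfl | hn
    · simpa using ha0 0
    · have hsub : Tendsto (fun m : ℕ => n * m) atTop atTop :=
        tendsto_atTop_mono (fun m => Nat.le_mul_of_pos_left m hn) tendsto_id
      have h2 : Tendsto
          (fun m : ℕ => ((ball (S : Set G) (n * m)).ncard : ℝ) ^ (1 / ((n * m : ℕ) : ℝ)))
          atTop (nhds lam) := hlam.comp hsub
      have key : ∀ᶠ m : ℕ in atTop,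
          ((ball (S : Set G) (n * m)).ncard : ℝ) ^ (1 / ((n * m : ℕ) : ℝ))
            ≤ ((ball (S : Set G) n).ncard : ℝ) ^ (1 / (n : ℝ)) := by
        filter_upwards [eventually_ge_atTop 1] with m hm
        have hn0 : (n : ℝ) ≠ 0 := Nat.cast_ne_zero.2 hn.ne'
        have hm0 : (m : ℝ) ≠ 0 := Nat.cast_ne_zero.2 (by omega)
        have h3 : ((ball (S : Set G) (n * m)).ncard : ℝ)
            ≤ ((ball (S : Set G) n).ncard : ℝ) ^ (m : ℕ) := by
          exact_mod_cast ncard_ball_mul_le S n m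
        calc ((ball (S : Set G) (n * m)).ncard : ℝ) ^ (1 / ((n * m : ℕ) : ℝ))
            ≤ (((ball (S : Set G) n).ncard : ℝ) ^ (m : ℕ)) ^ (1 / ((n * m : ℕ) : ℝ)) :=
              Real.rpow_le_rpow (by positivity) h3 (by positivity)
          _ = ((ball (S : Set G) n).ncard : ℝ) ^ ((m : ℝ) * (1 / ((n * m : ℕ) : ℝ))) := by
              rw [← Real.rpow_natCast ((ball (S : Set G) n).ncard : ℝ) m,
                ← Real.rpow_mul (hBpos n).le]
          _ = _ := by
              congr 1
              push_cast
              field_simp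
      have hle : lam ≤ ((ball (S : Set G) n).ncard : ℝ) ^ (1 / (n : ℝ)) :=
        le_of_tendsto h2 key
      have hlog := Real.log_le_log (by linarith) hle
      rw [Real.log_rpow (hBpos n)] at hlog
      have hn0 : (0 : ℝ) < (n : ℝ) := Nat.cast_pos.2 hn
      rw [← hLdef] at hlog
      calc (n : ℝ) * L ≤ (n : ℝ) * (1 / (n : ℝ) * a n) :=
            mul_le_mul_of_nonneg_left hlog hn0.le
        _ = a n := by field_simp
  -- the defect c and its running maximum d
  set c : ℕ → ℝ := fun n => a n - n * L with hc
  have hc0 : ∀ n, 0 ≤ c n := fun n => sub_nonneg.2 (hlow n)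
  have hcn : Tendsto (fun n : ℕ => c n / n) atTop (nhds 0) := by
    have h1 : Tendsto (fun n : ℕ => (1 / (n : ℝ)) * a n - L) atTop (nhds (L - L)) :=
      hloga.sub_const L
    rw [sub_self] at h1
    refine h1.congr' ?_
    filter_upwards [eventually_ge_atTop 1] with n hn
    have hn0 : (n : ℝ) ≠ 0 := Nat.cast_ne_zero.2 (by omega)
    simp only [hc]
    field_simp
  set d : ℕ → ℝ := fun n => (Finset.range (n + 1)).sup' Finset.nonempty_range_add_one c with hd
  have hdmono : Monotone d := fun m n h =>
    Finset.sup'_mono c (Finset.range_subset_range.2 (by omega)) _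
  have hcled : ∀ {m n : ℕ}, m ≤ n → c m ≤ d n := fun {m n} h =>
    Finset.le_sup' c (Finset.mem_range.2 (by omega))
  have hd0 : ∀ n, 0 ≤ d n := fun n => (hc0 0).trans (hcled (Nat.zero_le n))
  -- d n / n → 0
  have hdn : Tendsto (fun n : ℕ => d n / n) atTop (nhds 0) := by
    rw [Metric.tendsto_atTop]
    intro ε hε
    rw [Metric.tendsto_atTop] at hcn
    obtain ⟨N₁, hN₁⟩ := hcn (ε / 2) (by linarith)
    obtain ⟨N₂, hN₂⟩ := exists_nat_gt (d N₁ / ε)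
    refine ⟨max (N₁ + 1) (N₂ + 1), fun n hn => ?_⟩
    have hn1 : 1 ≤ n := le_trans (by omega) hn
    have hnN1 : N₁ + 1 ≤ n := le_trans (le_max_left _ _) hn
    have hnN2 : N₂ ≤ n := le_trans (by omega) hn
    have hnpos : (0 : ℝ) < n := by exact_mod_cast hn1
    have hdlt : d n < ε * n := by
      rw [hd, Finset.sup'_lt_iff]
      intro m hm
      rcases le_or_gt m N₁ with hmN | hmN
      · calc c m ≤ d N₁ := hcled hmN
          _ < ε * N₂ := by
            rw [div_lt_iff₀ hε] at hN₂
            linarith [hN₂]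
          _ ≤ ε * n := by
            have : (N₂ : ℝ) ≤ n := by exact_mod_cast hnN2
            nlinarith
      · have hm1 : (0:ℝ) < m := by exact_mod_cast Nat.lt_of_lt_of_le (Nat.zero_lt_succ N₁) hmN
        have := hN₁ m (by omega)
        rw [Real.dist_eq, sub_zero, abs_of_nonneg (div_nonneg (hc0 m) hm1.le)] at this
        rw [div_lt_iff₀ hm1] at this
        have hmn : (m : ℝ) ≤ n := by exact_mod_cast Nat.lt_succ_iff.1 (Finset.mem_range.1 hm)
        have h8 : ε / 2 * (m : ℝ) ≤ ε / 2 * n := mul_le_mul_of_nonneg_left hmn (half_pos hε).le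
        have h9 : ε / 2 * (n : ℝ) < ε * n := mul_lt_mul_of_pos_right (by linarith) hnpos
        exact lt_of_lt_of_le this (h8.trans h9.le)
    rw [Real.dist_eq, sub_zero, abs_of_nonneg (div_nonneg (hd0 n) hnpos.le), div_lt_iff₀ hnpos]
    exact hdlt
  -- the function q
  refine ⟨fun n => (d n + Real.sqrt n + 1) / L, ?_, ?_, ?_, ?_, ?_⟩
  · intro m n h
    have hs : Real.sqrt m ≤ Real.sqrt n := Real.sqrt_le_sqrt (by exact_mod_cast h)
    have := hdmono h
    exact (div_le_div_iff_of_pos_right hL).2 (by linarith)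
  · intro n
    have := hd0 n
    have := Real.sqrt_nonneg (n : ℝ)
    positivity
  · refine tendsto_atTop_mono (fun n => ?_)
      (sqrt_nat_tendsto_atTop.atTop_div_const hL)
    have := hd0 n
    exact (div_le_div_iff_of_pos_right hL).2 (by linarith)
  · have hsq : Tendsto (fun n : ℕ => Real.sqrt n / n) atTop (nhds 0) := by
      have h1 : Tendsto (fun n : ℕ => (Real.sqrt n)⁻¹) atTop (nhds 0) :=
        sqrt_nat_tendsto_atTop.inv_tendsto_atTop
      refine h1.congr' ?_
      filter_upwards [eventually_ge_atTop 1] with n hn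
      have hnpos : (0 : ℝ) < n := by exact_mod_cast hn
      have hspos : (0 : ℝ) < Real.sqrt n := Real.sqrt_pos.2 hnpos
      rw [eq_div_iff hnpos.ne', inv_mul_eq_div, div_eq_iff hspos.ne',
        Real.mul_self_sqrt hnpos.le]
    have h2 : Tendsto (fun n : ℕ => (d n / n + Real.sqrt n / n + 1 / n) / L) atTop
        (nhds ((0 + 0 + 0) / L)) :=
      ((hdn.add hsq).add tendsto_one_div_atTop_nhds_zero_nat).div_const L
    simp only [add_zero, zero_add, zero_div] at h2
    refine h2.congr' ?_
    filter_upwards [eventually_ge_atTop 1] with n hn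
    have hn0 : (n : ℝ) ≠ 0 := Nat.cast_ne_zero.2 (by omega)
    rw [← add_div, ← add_div, div_div, div_div, mul_comm]
  · -- the main growth statement
    have hqdiv : Tendsto (fun n : ℕ => ((d n + Real.sqrt n + 1) / L) / n) atTop (nhds 0) := by
      have h2 : Tendsto (fun n : ℕ => (d n / n + Real.sqrt n / n + 1 / n) / L) atTop
          (nhds ((0 + 0 + 0) / L)) := by
        refine (Tendsto.add (Tendsto.add hdn ?_) tendsto_one_div_atTop_nhds_zero_nat).div_const L
        have h1 : Tendsto (fun n : ℕ => (Real.sqrt n)⁻¹) atTop (nhds 0) :=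
          sqrt_nat_tendsto_atTop.inv_tendsto_atTop
        refine h1.congr' ?_
        filter_upwards [eventually_ge_atTop 1] with n hn
        have hnpos : (0 : ℝ) < n := by exact_mod_cast hn
        have hspos : (0 : ℝ) < Real.sqrt n := Real.sqrt_pos.2 hnpos
        rw [eq_div_iff hnpos.ne', inv_mul_eq_div, div_eq_iff hspos.ne',
          Real.mul_self_sqrt hnpos.le]
      simp only [add_zero, zero_add, zero_div] at h2
      refine h2.congr' ?_
      filter_upwards [eventually_ge_atTop 1] with n hn
      have hn0 : (n : ℝ) ≠ 0 := Nat.cast_ne_zero.2 (by omega)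
      rw [← add_div, ← add_div, div_div, div_div, mul_comm]
    have hqle : ∀ᶠ n : ℕ in atTop, (d n + Real.sqrt n + 1) / L ≤ n := by
      filter_upwards [hqdiv.eventually_lt_const one_pos, eventually_ge_atTop 1] with n h1 h2
      have hnpos : (0 : ℝ) < n := by exact_mod_cast h2
      rw [div_lt_one hnpos] at h1
      exact h1.le
    have htop : Tendsto (fun n : ℕ => Real.exp (Real.sqrt n + (1 - L))) atTop atTop :=
      Real.tendsto_exp_atTop.comp (tendsto_atTop_add_const_right _ (1 - L)
        sqrt_nat_tendsto_atTop)
    refine tendsto_atTop_mono' atTop ?_ htop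
    filter_upwards [hqle] with n hqn
    set qn : ℝ := (d n + Real.sqrt n + 1) / L with hqn'
    set k : ℕ := ⌊qn⌋₊ with hk'
    have hqpos : 0 ≤ qn := by
      have := hd0 n; have := Real.sqrt_nonneg (n : ℝ); positivity
    have hk : k ≤ n := by
      have h1 : (k : ℝ) ≤ (n : ℝ) := (Nat.floor_le hqpos).trans hqn
      exact_mod_cast h1
    have hcast : ((n - k : ℕ) : ℝ) = (n : ℝ) - k := by
      push_cast [Nat.cast_sub hk]; ring
    have hqL : qn * L = d n + Real.sqrt n + 1 := div_mul_cancel₀ _ hL.ne'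
    have hlt : qn - 1 < (k : ℝ) := Nat.sub_one_lt_floor qn
    have hkL : d n + Real.sqrt n + 1 - L ≤ (k : ℝ) * L := by nlinarith
    rw [le_div_iff₀ (hBpos (n - k))]
    have e1 : ((ball (S : Set G) (n - k)).ncard : ℝ) = Real.exp (a (n - k)) :=
      (Real.exp_log (hBpos _)).symm
    have e2 : ((ball (S : Set G) n).ncard : ℝ) = Real.exp (a n) :=
      (Real.exp_log (hBpos _)).symm
    rw [e1, e2, ← Real.exp_add, Real.exp_le_exp]
    have h5 : a (n - k) - ((n - k : ℕ) : ℝ) * L ≤ d n := hcled (Nat.sub_le n k)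
    have h6 : (n : ℝ) * L ≤ a n := hlow n
    have h7 : (((n : ℝ) - k)) * L = (n : ℝ) * L - (k : ℝ) * L := by ring
    rw [hcast] at h5
    linarith
end

section
/- Let G = F × ⟨t⟩ where F is the free group of rank 2 and ⟨t⟩ ≅ ℤ, with S = {x,y,t}. Then the density of F in G with respect to S equals 1/2, i.e., lim_{n→∞} |B_{G,S}(n) ∩ F| / |B_{G,S}(n)| = 1/2. -/
open Filter

abbrev F2 : Type := FreeGroup (Fin 2)
abbrev G2 : Type := F2 × Multiplicative ℤ

def xF : F2 := FreeGroup.of 0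
def yF : F2 := FreeGroup.of 1
def tG : G2 := (1, Multiplicative.ofAdd 1)

def SG : Set G2 := {(xF, 1), (yF, 1), tG}

namespace Density

abbrev A : Type := Fin 2 × Bool

/-- the relation: the next letter does not cancel the previous one -/
def R (p q : A) : Prop := q ≠ (p.1, !p.2)

/-- reduced words of length `n` -/
def RW : ℕ → Finset (List A)
  | 0 => {[]}
  | n+1 => (RW n).biUnion fun w =>
      (Finset.univ.filter fun a : A => w.head? ≠ some (a.1, !a.2)).image (fun a => a :: w)

lemma ok_iff (a : A) (w : List A) :
    w.head? ≠ some (a.1, !a.2) ↔ ∀ y ∈ w.head?, R a y := by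
  cases w <;> simp [R, eq_comm]

lemma mem_RW {n : ℕ} {w : List A} : w ∈ RW n ↔ w.length = n ∧ w.Chain' R := by
  induction n generalizing w with
  | zero =>
    simp only [RW, Finset.mem_singleton, List.length_eq_zero_iff]
    constructor
    · rintro rfl; simp [List.Chain']
    · rintro ⟨rfl, -⟩; rfl
  | succ n ih =>
    simp only [RW, Finset.mem_biUnion, Finset.mem_image, Finset.mem_filter, Finset.mem_univ,
      true_and]
    constructor
    · rintro ⟨v, hv, a, ha, rfl⟩
      obtain ⟨hlen, hch⟩ := ih.1 hv
      exact ⟨by simp [hlen], List.isChain_cons.2 ⟨(ok_iff a v).1 ha, hch⟩⟩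
    · rintro ⟨hlen, hch⟩
      cases w with
      | nil => simp at hlen
      | cons a v =>
        obtain ⟨h1, h2⟩ := List.isChain_cons.1 hch
        exact ⟨v, ih.2 ⟨by simpa using hlen, h2⟩, a, (ok_iff a v).2 h1, rfl⟩

lemma biUnion_disj (n : ℕ) : ∀ x ∈ RW n, ∀ y ∈ RW n, x ≠ y →
    Disjoint ((Finset.univ.filter fun a : A => x.head? ≠ some (a.1, !a.2)).image (fun a => a :: x))
      ((Finset.univ.filter fun a : A => y.head? ≠ some (a.1, !a.2)).image (fun a => a :: y)) := by
  intro x _ y _ hxy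
  simp only [Finset.disjoint_left, Finset.mem_image]
  rintro w ⟨a, -, rfl⟩ ⟨b, -, h⟩
  exact hxy ((List.cons.injEq _ _ _ _ ▸ h).2.symm)

lemma card_RW_succ_succ (n : ℕ) : (RW (n+2)).card = 3 * (RW (n+1)).card := by
  rw [show RW (n+2) = (RW (n+1)).biUnion fun w =>
      (Finset.univ.filter fun a : A => w.head? ≠ some (a.1, !a.2)).image (fun a => a :: w)
      from rfl]
  rw [Finset.card_biUnion (biUnion_disj (n+1))]
  rw [Finset.sum_congr rfl (g := fun _ => 3)]
  · simp [mul_comm]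
  · intro w hw
    rw [Finset.card_image_of_injective _ (fun a b h => (List.cons.injEq _ _ _ _ ▸ h).1)]
    obtain ⟨hlen, -⟩ := mem_RW.1 hw
    cases w with
    | nil => simp at hlen
    | cons b v =>
      have he : (Finset.univ.filter fun a : A => (b :: v).head? ≠ some (a.1, !a.2)) =
          Finset.univ.erase (b.1, !b.2) := by
        ext ⟨a1, a2⟩
        obtain ⟨b1, b2⟩ := b
        simp only [Finset.mem_filter, Finset.mem_univ, true_and, Finset.mem_erase, and_true,
          List.head?_cons, ne_eq, Option.some.injEq, Prod.mk.injEq]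
        cases a2 <;> cases b2 <;> simp [eq_comm]
      rw [he, Finset.card_erase_of_mem (Finset.mem_univ _)]
      decide

lemma card_RW_one : (RW 1).card = 4 := by decide

lemma card_RW : ∀ n : ℕ, (RW (n+1)).card = 4 * 3 ^ n
  | 0 => card_RW_one
  | n+1 => by rw [card_RW_succ_succ, card_RW n, pow_succ]; ring
lemma reduce_eq_self_of_chain : ∀ {L : List A}, L.Chain' R → FreeGroup.reduce L = L := by
  intro L hL
  induction L with
  | nil => rfl
  | cons x L ih =>
    obtain ⟨h1, h2⟩ := List.isChain_cons.1 hL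
    rw [FreeGroup.reduce.cons, ih h2]
    cases L with
    | nil => rfl
    | cons hd tl =>
      have : ¬(x.1 = hd.1 ∧ x.2 = !hd.2) := by
        rintro ⟨ha, hb⟩
        exact h1 hd (by simp) (Prod.ext ha.symm (by rw [hb]; simp))
      simp only [this, if_false]

lemma not_chain_decomp : ∀ {L : List A}, ¬ L.Chain' R →
    ∃ (L₁ L₂ : List A) (x : Fin 2) (b : Bool), L = L₁ ++ (x, b) :: (x, !b) :: L₂ := by
  intro L hL
  induction L with
  | nil => exact absurd List.isChain_nil hL
  | cons a L ih =>
    cases L with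
    | nil => exact absurd (List.isChain_singleton a) hL
    | cons c t =>
      rw [show List.Chain' R (a :: c :: t) ↔ _ from List.isChain_cons_cons, not_and_or] at hL
      rcases hL with h | h
      · rw [R, not_not] at h
        exact ⟨[], t, a.1, a.2, by rw [h]; rfl⟩
      · obtain ⟨L₁, L₂, x, b, hdec⟩ := ih h
        exact ⟨a :: L₁, L₂, x, b, by rw [hdec]; rfl⟩

lemma chain_of_reduce_eq_self {L : List A} (h : FreeGroup.reduce L = L) : L.Chain' R := by
  by_contra hc
  obtain ⟨L₁, L₂, x, b, rfl⟩ := not_chain_decomp hc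
  exact FreeGroup.reduce.not h

lemma chain_toWord (f : FreeGroup (Fin 2)) : f.toWord.Chain' R :=
  chain_of_reduce_eq_self (FreeGroup.reduce_toWord f)

lemma toWord_mk_of_chain {L : List A} (h : L.Chain' R) : (FreeGroup.mk L).toWord = L := by
  rw [FreeGroup.toWord_mk, reduce_eq_self_of_chain h]

lemma prod_letters : ∀ L : List A,
    (L.map fun q => cond q.2 (FreeGroup.of q.1) (FreeGroup.of q.1)⁻¹).prod = FreeGroup.mk L := by
  intro L
  induction L with
  | nil => rw [List.map_nil, List.prod_nil, FreeGroup.one_eq_mk]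
  | cons q L ih =>
    rw [List.map_cons, List.prod_cons, ih,
      show (q :: L) = [q] ++ L from rfl, ← FreeGroup.mul_mk]
    congr 1
    obtain ⟨a, b⟩ := q
    cases b
    · show (FreeGroup.of a)⁻¹ = _
      rw [show FreeGroup.of a = FreeGroup.mk [(a, true)] from rfl, FreeGroup.inv_mk]
      rfl
    · rfl

def BallF (m : ℕ) : Finset F2 :=
  ((Finset.range (m+1)).biUnion RW).image FreeGroup.mk

lemma mem_BallF {m : ℕ} {f : F2} : f ∈ BallF m ↔ FreeGroup.norm f ≤ m := by
  simp only [BallF, Finset.mem_image, Finset.mem_biUnion, Finset.mem_range]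
  constructor
  · rintro ⟨w, ⟨ℓ, hℓ, hw⟩, rfl⟩
    obtain ⟨hlen, hch⟩ := mem_RW.1 hw
    rw [FreeGroup.norm, toWord_mk_of_chain hch, hlen]; omega
  · intro h
    exact ⟨f.toWord, ⟨FreeGroup.norm f, by omega, mem_RW.2 ⟨rfl, chain_toWord f⟩⟩,
      FreeGroup.mk_toWord⟩

lemma card_biUnion_RW : ∀ m : ℕ, ((Finset.range (m+1)).biUnion RW).card = 2 * 3 ^ m - 1 := by
  have hd : ∀ m : ℕ, ∀ x ∈ Finset.range (m+1), ∀ y ∈ Finset.range (m+1), x ≠ y →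
      Disjoint (RW x) (RW y) := by
    intro m x _ y _ hxy
    simp only [Finset.disjoint_left]
    intro w hx hy
    exact hxy ((mem_RW.1 hx).1 ▸ (mem_RW.1 hy).1 ▸ rfl)
  intro m
  rw [Finset.card_biUnion (hd m)]
  induction m with
  | zero => decide
  | succ m ih =>
    rw [Finset.sum_range_succ, ih, card_RW m]
    have h3 : (3:ℕ) ^ (m+1) = 3 * 3 ^ m := pow_succ' 3 m
    have h1 : 0 < 2 * 3 ^ m := by positivity
    omega

lemma card_BallF (m : ℕ) : (BallF m).card = 2 * 3 ^ m - 1 := by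
  rw [BallF, Finset.card_image_of_injOn, card_biUnion_RW]
  intro u hu v hv h
  simp only [Finset.coe_biUnion, Finset.mem_coe, Finset.mem_biUnion, Set.mem_iUnion,
    Finset.mem_range] at hu hv
  obtain ⟨ℓ, _, hu⟩ := hu
  obtain ⟨ℓ', _, hv⟩ := hv
  rw [← toWord_mk_of_chain (mem_RW.1 hu).2, ← toWord_mk_of_chain (mem_RW.1 hv).2, h]

lemma prod_pair : ∀ (w : List G2), w.prod = ((w.map Prod.fst).prod, (w.map Prod.snd).prod) := by
  intro w
  induction w with
  | nil => rfl
  | cons x w ih => simp [List.prod_cons, ih, Prod.ext_iff]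

lemma mem_SG_bound : ∀ y : G2, y ∈ SG →
    FreeGroup.norm y.1 + (Multiplicative.toAdd y.2).natAbs ≤ 1 := by
  intro y hy
  rcases hy with rfl | rfl | rfl
  · simp [xF, FreeGroup.norm_of]
  · simp [yF, FreeGroup.norm_of]
  · simp [tG, FreeGroup.norm_one]

lemma letter_bound {x : G2} (hx : x ∈ SG ∨ x⁻¹ ∈ SG) :
    FreeGroup.norm x.1 + (Multiplicative.toAdd x.2).natAbs ≤ 1 := by
  rcases hx with h | h
  · exact mem_SG_bound x h
  · have := mem_SG_bound x⁻¹ h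
    simpa [FreeGroup.norm_inv_eq] using this

lemma key_bound : ∀ w : List G2, (∀ x ∈ w, x ∈ SG ∨ x⁻¹ ∈ SG) →
    FreeGroup.norm (w.prod).1 + (Multiplicative.toAdd (w.prod).2).natAbs ≤ w.length := by
  intro w hw
  induction w with
  | nil => simp [FreeGroup.norm_one]
  | cons x w ih =>
    have hx := letter_bound (hw x (by simp))
    have hrest := ih (fun y hy => hw y (by simp [hy]))
    rw [List.prod_cons]
    have h1 : FreeGroup.norm ((x * w.prod).1) ≤
        FreeGroup.norm x.1 + FreeGroup.norm (w.prod).1 := FreeGroup.norm_mul_le _ _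
    have h2 : (Multiplicative.toAdd ((x * w.prod).2)).natAbs ≤
        (Multiplicative.toAdd x.2).natAbs + (Multiplicative.toAdd (w.prod).2).natAbs := by
      show (Multiplicative.toAdd (x.2 * (w.prod).2)).natAbs ≤ _
      rw [toAdd_mul]
      exact Int.natAbs_add_le _ _
    simp only [List.length_cons]
    omega

lemma gen_mem (a : Fin 2) : ((FreeGroup.of a, 1) : G2) ∈ SG := by
  fin_cases a
  · left; rfl
  · right; left; rfl

lemma tG_pow (m : ℕ) : tG ^ m = ((1 : F2), Multiplicative.ofAdd (m : ℤ)) := by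
  induction m with
  | zero => rfl
  | succ m ih =>
    rw [pow_succ, ih]
    show ((1 : F2) * 1, Multiplicative.ofAdd (m : ℤ) * Multiplicative.ofAdd (1 : ℤ)) = _
    rw [one_mul, ← ofAdd_add]
    push_cast
    rfl

lemma mem_ball_iff {n : ℕ} {p : G2} :
    p ∈ ball SG n ↔ FreeGroup.norm p.1 + (Multiplicative.toAdd p.2).natAbs ≤ n := by
  constructor
  · rintro ⟨w, hlen, hS, rfl⟩
    exact le_trans (key_bound w hS) hlen
  · intro h
    set k := Multiplicative.toAdd p.2 with hk
    refine ⟨(p.1.toWord.map fun q =>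
        ((cond q.2 (FreeGroup.of q.1) (FreeGroup.of q.1)⁻¹ : F2), (1 : Multiplicative ℤ)))
      ++ List.replicate k.natAbs (if 0 ≤ k then tG else tG⁻¹), ?_, ?_, ?_⟩
    · rw [List.length_append, List.length_map, List.length_replicate]; exact h
    · intro x hx
      rcases List.mem_append.1 hx with h1 | h2
      · obtain ⟨q, hq, rfl⟩ := List.mem_map.1 h1
        obtain ⟨a, b⟩ := q
        cases b
        · right
          simpa using gen_mem a
        · left
          simpa using gen_mem a
      · rw [List.eq_of_mem_replicate h2]
        split_ifs
        · left; right; right; rfl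
        · right; rw [inv_inv]; right; right; rfl
    · rw [List.prod_append, List.prod_replicate]
      have h1 : (p.1.toWord.map fun q =>
          ((cond q.2 (FreeGroup.of q.1) (FreeGroup.of q.1)⁻¹ : F2), (1 : Multiplicative ℤ))).prod
          = (p.1, 1) := by
        rw [prod_pair]
        congr 1
        · rw [List.map_map]
          show (p.1.toWord.map fun q => cond q.2 (FreeGroup.of q.1) (FreeGroup.of q.1)⁻¹).prod = _
          rw [prod_letters, FreeGroup.mk_toWord]
        · rw [List.map_map]
          show (p.1.toWord.map fun _ => (1 : Multiplicative ℤ)).prod = 1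
          simp
      have h2 : (if 0 ≤ k then tG else tG⁻¹) ^ k.natAbs = ((1 : F2), Multiplicative.ofAdd k) := by
        split_ifs with hpos
        · rw [tG_pow, Int.natAbs_of_nonneg hpos]
        · have hneg : -(k.natAbs : ℤ) = k := by omega
          rw [inv_pow, tG_pow, ← hneg]
          simp [Prod.ext_iff, ofAdd_neg]
      rw [h1, h2]
      show (p.1 * 1, 1 * Multiplicative.ofAdd k) = p
      rw [mul_one, one_mul, hk, ofAdd_toAdd]

noncomputable def BallG (n : ℕ) : Finset G2 :=
  (Finset.Icc (-(n:ℤ)) n).biUnion fun k =>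
    (BallF (n - k.natAbs)).image fun f => (f, Multiplicative.ofAdd k)

lemma ball_eq_coe (n : ℕ) : ball SG n = ↑(BallG n) := by
  ext p
  rw [show (p ∈ ball SG n) ↔ _ from mem_ball_iff, Finset.mem_coe]
  simp only [BallG, Finset.mem_biUnion, Finset.mem_Icc, Finset.mem_image, mem_BallF]
  constructor
  · intro h
    refine ⟨Multiplicative.toAdd p.2, ⟨by omega, by omega⟩, p.1, by omega, ?_⟩
    rw [ofAdd_toAdd]
  · rintro ⟨k, ⟨hk1, hk2⟩, f, hf, rfl⟩
    simp only [toAdd_ofAdd]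
    omega

lemma inter_eq_coe (n : ℕ) : ball SG n ∩ {p : G2 | p.2 = 1}
    = ↑((BallF n).image fun f => (f, (1 : Multiplicative ℤ))) := by
  ext p
  simp only [Set.mem_inter_iff, Set.mem_setOf_eq,
    show (p ∈ ball SG n) ↔ _ from mem_ball_iff, Finset.coe_image, Set.mem_image,
    Finset.mem_coe, mem_BallF]
  constructor
  · rintro ⟨h1, h2⟩
    refine ⟨p.1, ?_, ?_⟩
    · rw [h2] at h1; simpa using h1
    · rw [← h2]
  · rintro ⟨f, hf, rfl⟩
    constructor
    · simpa using hf
    · rfl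

lemma c_succ (m : ℕ) : 2 * 3 ^ (m+1) - 1 = 3 * (2 * 3 ^ m - 1) + 2 := by
  have h3 : (3:ℕ) ^ (m+1) = 3 * 3 ^ m := pow_succ' 3 m
  have h0 : 0 < 3 ^ m := by positivity
  omega

lemma lin_le : ∀ n : ℕ, 2 * n + 4 ≤ 4 * 3 ^ n
  | 0 => by norm_num
  | n+1 => by
    have := lin_le n
    have h3 : (3:ℕ) ^ (n+1) = 3 * 3 ^ n := pow_succ' 3 n
    omega

lemma sum_formula : ∀ n : ℕ,
    (∑ k ∈ Finset.Icc (-(n:ℤ)) n, (2 * 3 ^ (n - k.natAbs) - 1)) = 4 * 3 ^ n - 2 * n - 3 := by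
  intro n
  induction n with
  | zero => simp
  | succ n ih =>
    have hc : ((n+1:ℕ):ℤ) = (n:ℤ)+1 := by push_cast; ring
    have hIcc : Finset.Icc (-((n:ℤ)+1)) ((n:ℤ)+1)
        = insert (-((n:ℤ)+1)) (insert (((n:ℤ)+1)) (Finset.Icc (-(n:ℤ)) n)) := by
      ext k
      simp only [Finset.mem_Icc, Finset.mem_insert]
      omega
    have hn1 : (-((n:ℤ)+1)) ∉ insert (((n:ℤ)+1)) (Finset.Icc (-(n:ℤ)) n) := by
      simp only [Finset.mem_insert, Finset.mem_Icc]
      omega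
    have hn2 : (((n:ℤ)+1)) ∉ Finset.Icc (-(n:ℤ)) n := by
      simp only [Finset.mem_Icc]
      omega
    have hcard : (Finset.Icc (-(n:ℤ)) n).card = 2*n+1 := by
      rw [Int.card_Icc]
      omega
    rw [hc, hIcc, Finset.sum_insert hn1, Finset.sum_insert hn2]
    have e1 : (n+1) - ((-((n:ℤ)+1))).natAbs = 0 := by omega
    have e2 : (n+1) - ((((n:ℤ)+1))).natAbs = 0 := by omega
    rw [e1, e2]
    rw [Finset.sum_congr rfl (g := fun k => 3 * (2 * 3 ^ (n - k.natAbs) - 1) + 2) ?_]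
    · rw [Finset.sum_add_distrib, ← Finset.mul_sum, ih, Finset.sum_const, hcard]
      have h3 : (3:ℕ) ^ (n+1) = 3 * 3 ^ n := pow_succ' 3 n
      have := lin_le n
      simp only [smul_eq_mul]
      omega
    · intro k hk
      simp only [Finset.mem_Icc] at hk
      have hle : k.natAbs ≤ n := by omega
      have : (n+1) - k.natAbs = (n - k.natAbs) + 1 := by omega
      rw [this, c_succ]

lemma card_BallG (n : ℕ) : (BallG n).card = 4 * 3 ^ n - 2 * n - 3 := by
  rw [BallG, Finset.card_biUnion]
  · rw [Finset.sum_congr rfl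
      (g := fun k : ℤ => 2 * 3 ^ (n - k.natAbs) - 1) ?_, sum_formula]
    intro k _
    rw [Finset.card_image_of_injective _ (fun a b h => congrArg Prod.fst h), card_BallF]
  · intro x _ y _ hxy
    simp only [Finset.disjoint_left, Finset.mem_image]
    rintro p ⟨f, _, rfl⟩ ⟨g, _, hg⟩
    apply hxy
    have := congrArg Prod.snd hg
    simpa using this.symm

lemma ncard_inter (n : ℕ) : (ball SG n ∩ {p : G2 | p.2 = 1}).ncard = 2 * 3 ^ n - 1 := by
  rw [inter_eq_coe, Set.ncard_coe_finset,
    Finset.card_image_of_injective _ (fun a b h => congrArg Prod.fst h), card_BallF]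

lemma ncard_ball (n : ℕ) : (ball SG n).ncard = 4 * 3 ^ n - 2 * n - 3 := by
  rw [ball_eq_coe, Set.ncard_coe_finset, card_BallG]

end Density

/-- In `G = F × ⟨t⟩` with `S = {x,y,t}`, the density of `F` in `G` equals
`1/2`: `lim_n |B_{G,S}(n) ∩ F| / |B_{G,S}(n)| = 1/2`. -/
theorem stmt10 :
    Tendsto (fun n : ℕ =>
      ((ball SG n ∩ {p : G2 | p.2 = 1}).ncard : ℝ) / ((ball SG n).ncard : ℝ))
      atTop (nhds (1 / 2)) := by
  have key : ∀ n : ℕ, ((ball SG n ∩ {p : G2 | p.2 = 1}).ncard : ℝ) / ((ball SG n).ncard : ℝ)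
      = (2 - (1/3:ℝ)^n) / (4 - (2*n+3) * (1/3:ℝ)^n) := by
    intro n
    rw [Density.ncard_inter, Density.ncard_ball]
    have h0 : 0 < 3 ^ n := Nat.pow_pos (by norm_num)
    have h1 : (1:ℕ) ≤ 2 * 3 ^ n := by omega
    have h2 : 2 * n + 3 ≤ 4 * 3 ^ n := by have := Density.lin_le n; omega
    have e1 : ((2 * 3 ^ n - 1 : ℕ) : ℝ) = 2 * 3 ^ n - 1 := by
      rw [Nat.cast_sub h1]; push_cast; ring
    have e2 : ((4 * 3 ^ n - 2 * n - 3 : ℕ) : ℝ) = 4 * 3 ^ n - (2 * n + 3) := by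
      have h : (4 * 3 ^ n - 2 * n - 3 : ℕ) = 4 * 3 ^ n - (2 * n + 3) := by omega
      rw [h, Nat.cast_sub h2]; push_cast; ring
    rw [e1, e2]
    have hpow : ((3:ℝ)^n) ≠ 0 := by positivity
    have hmul : (3:ℝ)^n * (1/3:ℝ)^n = 1 := by rw [← mul_pow]; norm_num
    rw [show (2 * (3:ℝ)^n - 1) = (3:ℝ)^n * (2 - (1/3:ℝ)^n) by linear_combination hmul,
      show (4 * (3:ℝ)^n - (2*(n:ℝ)+3)) = (3:ℝ)^n * (4 - (2*(n:ℝ)+3) * (1/3:ℝ)^n) by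
        linear_combination (2*(n:ℝ)+3) * hmul,
      mul_div_mul_left _ _ hpow]
  rw [show (1/2 : ℝ) = 2/4 by norm_num]
  apply Tendsto.congr (fun n => (key n).symm)
  have hr1 : (0:ℝ) ≤ 1/3 := by norm_num
  have hr2 : (1/3:ℝ) < 1 := by norm_num
  apply Tendsto.div
  · have := (tendsto_const_nhds : Tendsto (fun _ : ℕ => (2:ℝ)) atTop (nhds 2)).sub
      (tendsto_pow_atTop_nhds_zero_of_lt_one hr1 hr2)
    simpa using this
  · have ha : Tendsto (fun n : ℕ => (2*(n:ℝ)+3) * (1/3:ℝ)^n) atTop (nhds 0) := by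
      have hb := (tendsto_self_mul_const_pow_of_lt_one hr1 hr2).const_mul (2:ℝ)
      have hc := (tendsto_pow_atTop_nhds_zero_of_lt_one hr1 hr2).const_mul (3:ℝ)
      have hd := hb.add hc
      simp only [mul_zero, add_zero] at hd
      apply Tendsto.congr _ hd
      intro n
      ring
    have := (tendsto_const_nhds : Tendsto (fun _ : ℕ => (4:ℝ)) atTop (nhds 4)).sub ha
    simpa using this
  · norm_num
end

section
/- Let G be a group generated by a finite set S, and suppose there exists a subset X ⊆ G with dens_S(X) = 0 such that sup{ |C_G(g) ∩ B_S(n)| / |B_S(n)| : g ∈ G ∖ X } → 0 as n → ∞. Then dc_S(G) = 0. -/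
open Filter

lemma one_mem_ball {G : Type*} [Group G] (S : Set G) (n : ℕ) : (1:G) ∈ ball S n :=
  ⟨[], by simp, by simp, by simp⟩

lemma ball_finite {G : Type*} [Group G] (S : Finset G) (n : ℕ) :
    (ball (S : Set G) n).Finite := by
  classical
  set T : Set G := {x | x ∈ S ∨ x⁻¹ ∈ S} with hT
  have hTfin : T.Finite := by
    have : T ⊆ ↑(S ∪ S.image (·⁻¹)) := by
      intro x hx
      rcases hx with h | h
      · simp [h]
      · simp only [Finset.coe_union, Set.mem_union, Finset.coe_image, Set.mem_image]
        exact Or.inr ⟨x⁻¹, h, by simp⟩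
    exact Set.Finite.subset (Finset.finite_toSet _) this
  haveI := hTfin.to_subtype
  have hsub : ball (S : Set G) n ⊆
      (fun l : List T => (l.map Subtype.val).prod) '' {l | l.length ≤ n} := by
    rintro g ⟨w, hlen, hmem, hprod⟩
    refine ⟨w.attachWith (· ∈ T) (fun x hx => hmem x hx), by simpa using hlen, ?_⟩
    simp [hprod]
  exact Set.Finite.subset ((List.finite_length_le _ n).image _) hsub

/-- If `X ⊆ G` has density `0` with respect to `S`, and the normalized sizes
of centralizers of elements outside `X` tend uniformly to `0`, then the degree
of commutativity `dc_S(G)` is `0`. -/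
theorem stmt14 {G : Type*} [Group G] (S : Finset G)
    (hSgen : Subgroup.closure (S : Set G) = ⊤)
    (X : Set G)
    (hdens : limsup (fun n : ℕ =>
      ((X ∩ ball (S : Set G) n).ncard : ℝ) / ((ball (S : Set G) n).ncard : ℝ))
      atTop = 0)
    (hsup : Tendsto (fun n : ℕ =>
      ⨆ g : {g : G // g ∉ X},
        (((Subgroup.centralizer {(g : G)} : Set G) ∩ ball (S : Set G) n).ncard : ℝ) /
          ((ball (S : Set G) n).ncard : ℝ))
      atTop (nhds 0)) :
    limsup (fun n : ℕ =>
      (({p : G × G | p.1 ∈ ball (S : Set G) n ∧ p.2 ∈ ball (S : Set G) n ∧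
          p.1 * p.2 = p.2 * p.1}).ncard : ℝ) /
        ((ball (S : Set G) n).ncard : ℝ) ^ 2)
      atTop = 0 := by
  classical
  set B : ℕ → Finset G := fun n => (ball_finite S n).toFinset with hBdef
  have hBmem : ∀ n (g : G), g ∈ B n ↔ g ∈ ball (S : Set G) n := by
    intro n g; simp [hBdef, Set.Finite.mem_toFinset]
  have hBcard : ∀ n, (ball (S : Set G) n).ncard = (B n).card := fun n =>
    Set.ncard_eq_toFinset_card _ (ball_finite S n)
  have hBpos : ∀ n, (0:ℝ) < (B n).card := by
    intro n
    have : (1:G) ∈ B n := (hBmem n 1).2 (one_mem_ball _ n)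
    exact_mod_cast Finset.card_pos.2 ⟨1, this⟩
  set a : ℕ → ℝ := fun n =>
    ((X ∩ ball (S : Set G) n).ncard : ℝ) / ((ball (S : Set G) n).ncard : ℝ) with hadef
  set b : ℕ → ℝ := fun n =>
    ⨆ g : {g : G // g ∉ X},
        (((Subgroup.centralizer {(g : G)} : Set G) ∩ ball (S : Set G) n).ncard : ℝ) /
          ((ball (S : Set G) n).ncard : ℝ) with hbdef
  set f : ℕ → ℝ := fun n =>
      (({p : G × G | p.1 ∈ ball (S : Set G) n ∧ p.2 ∈ ball (S : Set G) n ∧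
          p.1 * p.2 = p.2 * p.1}).ncard : ℝ) /
        ((ball (S : Set G) n).ncard : ℝ) ^ 2 with hfdef
  -- centralizer-ball intersections as finsets
  have hcent : ∀ n (g : G),
      (((Subgroup.centralizer {g} : Set G) ∩ ball (S : Set G) n).ncard : ℝ)
        = (((B n).filter (fun h => g * h = h * g)).card : ℝ) := by
    intro n g
    have : (Subgroup.centralizer {g} : Set G) ∩ ball (S : Set G) n
        = ↑((B n).filter (fun h => g * h = h * g)) := by
      ext h
      simp only [Set.mem_inter_iff, SetLike.mem_coe, Subgroup.mem_centralizer_iff,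
        Finset.coe_filter, Set.mem_setOf_eq, hBmem, Set.mem_singleton_iff]
      constructor
      · rintro ⟨hc, hb⟩; exact ⟨hb, hc g rfl⟩
      · rintro ⟨hb, hc⟩; exact ⟨fun x hx => hx ▸ hc, hb⟩
    rw [this, Set.ncard_coe_finset]
  -- the X-part as finsets
  have hXf : ∀ n, ((X ∩ ball (S : Set G) n).ncard : ℝ)
      = (((B n).filter (· ∈ X)).card : ℝ) := by
    intro n
    have : X ∩ ball (S : Set G) n = ↑((B n).filter (· ∈ X)) := by
      ext g
      simp [Set.mem_inter_iff, hBmem, and_comm]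
    rw [this, Set.ncard_coe_finset]
  -- each b-term is at most b n
  have hble : ∀ n (g : G), g ∉ X →
      (((Subgroup.centralizer {g} : Set G) ∩ ball (S : Set G) n).ncard : ℝ) /
        ((ball (S : Set G) n).ncard : ℝ) ≤ b n := by
    intro n g hg
    refine le_ciSup (f := fun g : {g : G // g ∉ X} =>
      (((Subgroup.centralizer {(g : G)} : Set G) ∩ ball (S : Set G) n).ncard : ℝ) /
          ((ball (S : Set G) n).ncard : ℝ)) ?_ ⟨g, hg⟩
    refine ⟨1, ?_⟩
    rintro x ⟨g', rfl⟩
    dsimp only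
    rw [hcent, hBcard]
    apply div_le_one_of_le₀ _ (le_of_lt (hBpos n))
    exact_mod_cast Finset.card_le_card (Finset.filter_subset _ _)
  have hb0 : ∀ n, 0 ≤ b n := by
    intro n
    rcases isEmpty_or_nonempty {g : G // g ∉ X} with hE | hNE
    · rw [hbdef]; simp [Real.iSup_of_isEmpty]
    · obtain ⟨g⟩ := hNE
      refine le_trans ?_ (hble n g.1 g.2)
      positivity
  -- main inequality : f n ≤ a n + b n
  have hmain : ∀ n, f n ≤ a n + b n := by
    intro n
    set k : ℝ := ((B n).card : ℝ) with hk
    have hk0 : 0 < k := hBpos n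
    set P : Finset (G × G) :=
      ((B n) ×ˢ (B n)).filter (fun p => p.1 * p.2 = p.2 * p.1) with hP
    have hPset : {p : G × G | p.1 ∈ ball (S : Set G) n ∧ p.2 ∈ ball (S : Set G) n ∧
          p.1 * p.2 = p.2 * p.1} = ↑P := by
      ext p
      simp [hP, Finset.mem_filter, Finset.mem_product, hBmem, Set.mem_setOf_eq, and_assoc]
    have hPcard : P.card = ∑ g ∈ B n, ((P.filter (fun p => p.1 = g)).card) :=
      Finset.card_eq_sum_card_fiberwise (fun p hp => by
        simp only [Finset.mem_coe, hP, Finset.mem_filter, Finset.mem_product] at hp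
        exact hp.1.1)
    have hfiber : ∀ g, ((P.filter (fun p => p.1 = g)).card : ℕ)
        ≤ ((B n).filter (fun h => g * h = h * g)).card := by
      intro g
      apply Finset.card_le_card_of_injOn Prod.snd
      · intro p hp
        simp only [Finset.mem_coe, hP, Finset.mem_filter, Finset.mem_product] at hp ⊢
        obtain ⟨⟨⟨h1, h2⟩, h3⟩, h4⟩ := hp
        exact ⟨h2, h4 ▸ h3⟩
      · intro p hp q hq hpq
        simp only [Finset.coe_filter, Set.mem_setOf_eq] at hp hq
        exact Prod.ext (hp.2.trans hq.2.symm) hpq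
    have hsum : (P.card : ℝ) ≤ (((B n).filter (· ∈ X)).card : ℝ) * k + k * (b n * k) := by
      have step1 : (P.card : ℝ) ≤ ∑ g ∈ B n,
          ((((B n).filter (fun h => g * h = h * g)).card : ℝ)) := by
        rw [hPcard]; push_cast
        exact Finset.sum_le_sum (fun g _ => by exact_mod_cast hfiber g)
      have split : ∑ g ∈ B n, ((((B n).filter (fun h => g * h = h * g)).card : ℝ))
          = ∑ g ∈ (B n).filter (· ∈ X), (((B n).filter (fun h => g * h = h * g)).card : ℝ)
            + ∑ g ∈ (B n).filter (· ∉ X), (((B n).filter (fun h => g * h = h * g)).card : ℝ) :=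
        (Finset.sum_filter_add_sum_filter_not _ _ _).symm
      have bound1 : ∑ g ∈ (B n).filter (· ∈ X),
          (((B n).filter (fun h => g * h = h * g)).card : ℝ)
          ≤ (((B n).filter (· ∈ X)).card : ℝ) * k := by
        rw [← nsmul_eq_mul]
        refine Finset.sum_le_card_nsmul _ _ k (fun g _ => ?_)
        rw [hk]
        exact_mod_cast Finset.card_le_card (Finset.filter_subset _ _)
      have bound2 : ∑ g ∈ (B n).filter (· ∉ X),
          (((B n).filter (fun h => g * h = h * g)).card : ℝ)
          ≤ k * (b n * k) := by
        have h1 : ∑ g ∈ (B n).filter (· ∉ X),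
            (((B n).filter (fun h => g * h = h * g)).card : ℝ)
            ≤ (((B n).filter (· ∉ X)).card : ℕ) • (b n * k) := by
          refine Finset.sum_le_card_nsmul _ _ _ (fun g hg => ?_)
          simp only [Finset.mem_filter] at hg
          have := hble n g hg.2
          rw [hcent, hBcard] at this
          calc (((B n).filter (fun h => g * h = h * g)).card : ℝ)
              = ((((B n).filter (fun h => g * h = h * g)).card : ℝ) / k) * k := by
                field_simp
            _ ≤ b n * k := by
                apply mul_le_mul_of_nonneg_right this (le_of_lt hk0)
        refine h1.trans ?_
        rw [nsmul_eq_mul]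
        apply mul_le_mul_of_nonneg_right _ (mul_nonneg (hb0 n) (le_of_lt hk0))
        rw [hk]
        exact_mod_cast Finset.card_le_card (Finset.filter_subset _ _)
      linarith [step1, split ▸ step1]
    -- conclude
    have hk2 : (0:ℝ) < k ^ 2 := by positivity
    have hf : f n = (P.card : ℝ) / k ^ 2 := by
      rw [hfdef]
      dsimp only
      rw [hPset, Set.ncard_coe_finset, hBcard n]
    have ha' : a n = (((B n).filter (· ∈ X)).card : ℝ) / k := by
      rw [hadef]
      dsimp only
      rw [hXf n, hBcard n]
    rw [hf, ha']
    rw [div_le_iff₀ hk2]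
    have : (((B n).filter (· ∈ X)).card : ℝ) / k + b n = 
        ((((B n).filter (· ∈ X)).card : ℝ) * k + k * (b n * k)) / k ^ 2 := by
      field_simp
    rw [this, div_mul_cancel₀ _ (ne_of_gt hk2)]
    exact hsum
  -- a tends to 0
  have ha1 : ∀ n, a n ≤ 1 := by
    intro n
    rw [hadef]
    dsimp only
    rw [hXf n, hBcard n]
    apply div_le_one_of_le₀ _ (le_of_lt (hBpos n))
    exact_mod_cast Finset.card_le_card (Finset.filter_subset _ _)
  have ha0 : ∀ n, 0 ≤ a n := fun n => by positivity
  have hatend : Tendsto a atTop (nhds (0:ℝ)) := by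
    apply tendsto_of_le_liminf_of_limsup_le _ (le_of_eq hdens)
      ⟨1, eventually_map.2 (Eventually.of_forall ha1)⟩
      ⟨0, eventually_map.2 (Eventually.of_forall ha0)⟩
    refine le_liminf_of_le ?_ (Eventually.of_forall ha0)
    exact Filter.IsBoundedUnder.isCoboundedUnder_ge ⟨1, eventually_map.2 (Eventually.of_forall ha1)⟩
  have habtend : Tendsto (fun n => a n + b n) atTop (nhds (0:ℝ)) := by
    simpa using hatend.add hsup
  have hf0 : ∀ n, 0 ≤ f n := fun n => by
    rw [hfdef]; positivity
  exact (squeeze_zero hf0 hmain habtend).limsup_eq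
end

section
/- Let G = A ⋊ ⟨t⟩ be finitely generated with A abelian and ⟨t⟩ ≅ ℤ. Then A has density dens_S(A) = 0 in G with respect to any finite generating set of the form S = S₀ ∪ {t} with S₀ ⊆ A. -/
open Filter

namespace Stmt18Aux


variable {G : Type*} [Group G]

/-- Products of lists of length `≤ n` with entries in `T`. -/
def wordSet (T : Set G) (n : ℕ) : Set G :=
  {g | ∃ l : List G, l.length ≤ n ∧ (∀ y ∈ l, y ∈ T) ∧ l.prod = g}

lemma one_mem_wordSet (T : Set G) (n : ℕ) : (1 : G) ∈ wordSet T n :=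
  ⟨[], by simp⟩

lemma wordSet_mono (T : Set G) {m n : ℕ} (h : m ≤ n) : wordSet T m ⊆ wordSet T n := by
  rintro g ⟨l, hl, hT, hp⟩
  exact ⟨l, hl.trans h, hT, hp⟩

lemma mul_mem_wordSet {T : Set G} {p q : ℕ} {a b : G}
    (ha : a ∈ wordSet T p) (hb : b ∈ wordSet T q) : a * b ∈ wordSet T (p + q) := by
  obtain ⟨l, hl, hT, hp⟩ := ha
  obtain ⟨l', hl', hT', hp'⟩ := hb
  refine ⟨l ++ l', ?_, ?_, by simp [hp, hp']⟩
  · simpa using Nat.add_le_add hl hl'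
  · intro y hy
    rcases List.mem_append.1 hy with h | h
    · exact hT y h
    · exact hT' y h

lemma single_mem_wordSet {T : Set G} {x : G} (hx : x ∈ T) : x ∈ wordSet T 1 :=
  ⟨[x], by simp [hx]⟩

lemma pow_mem_wordSet {T : Set G} {x : G} (hx : x ∈ T) (k : ℕ) : x ^ k ∈ wordSet T k := by
  refine ⟨List.replicate k x, by simp, ?_, by simp [List.prod_replicate]⟩
  intro y hy
  rw [List.eq_of_mem_replicate hy]
  exact hx

lemma inv_mem_wordSet {T : Set G} (hsym : ∀ y ∈ T, y⁻¹ ∈ T) {n : ℕ} {g : G}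
    (hg : g ∈ wordSet T n) : g⁻¹ ∈ wordSet T n := by
  obtain ⟨l, hl, hT, hp⟩ := hg
  refine ⟨(l.map (fun x => x⁻¹)).reverse, by simpa using hl, ?_, ?_⟩
  · intro y hy
    rw [List.mem_reverse] at hy
    obtain ⟨x, hx, rfl⟩ := List.mem_map.1 hy
    exact hsym x (hT x hx)
  · rw [← List.prod_inv_reverse, hp]

lemma wordSet_finite {T : Set G} (hT : T.Finite) (n : ℕ) : (wordSet T n).Finite := by
  induction n with
  | zero =>
      refine Set.Finite.subset (Set.finite_singleton 1) ?_
      rintro g ⟨l, hl, -, hp⟩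
      rw [List.length_eq_zero_iff.1 (Nat.le_zero.1 hl)] at hp
      simpa using hp.symm
  | succ n ih =>
      refine Set.Finite.subset ((Set.finite_singleton (1:G)).union (hT.image2 (· * ·) ih)) ?_
      rintro g ⟨l, hl, hTl, hp⟩
      match l with
      | [] => left; simpa using hp.symm
      | x :: l' =>
          right
          refine ⟨x, hTl x (by simp), l'.prod, ⟨l', ?_, fun y hy => hTl y (by simp [hy]), rfl⟩, by simpa using hp⟩
          simpa using Nat.succ_le_succ_iff.1 hl

lemma wordSet_subset_subgroup {T : Set G} {A : Subgroup G} (hTA : T ⊆ A) (n : ℕ) :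
    wordSet T n ⊆ (A : Set G) := by
  rintro g ⟨l, -, hT, rfl⟩
  exact list_prod_mem (fun x hx => hTA (hT x hx))

lemma ball_eq_wordSet (S : Set G) (n : ℕ) : ball S n = wordSet (S ∪ S⁻¹) n := by
  unfold ball wordSet
  ext g
  refine exists_congr fun l => and_congr_right fun _ => and_congr_left fun _ => ?_
  refine forall_congr' fun x => forall_congr' fun _ => ?_
  simp [Set.mem_inv]

lemma ball_symm_letters (S : Set G) : ∀ y ∈ S ∪ S⁻¹, y⁻¹ ∈ S ∪ S⁻¹ := by
  intro y hy
  rcases hy with h | h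
  · right; simpa [Set.mem_inv] using h
  · left; simpa [Set.mem_inv] using h

lemma ball_finite {S : Set G} (hS : S.Finite) (n : ℕ) : (ball S n).Finite := by
  rw [ball_eq_wordSet]
  exact wordSet_finite (hS.union hS.inv) n

lemma one_mem_ball (S : Set G) (n : ℕ) : (1 : G) ∈ ball S n := by
  rw [ball_eq_wordSet]; exact one_mem_wordSet _ _

lemma inv_mem_ball {S : Set G} {n : ℕ} {g : G} (hg : g ∈ ball S n) : g⁻¹ ∈ ball S n := by
  rw [ball_eq_wordSet] at *
  exact inv_mem_wordSet (ball_symm_letters S) hg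

lemma mul_mem_ball {S : Set G} {p q : ℕ} {a b : G}
    (ha : a ∈ ball S p) (hb : b ∈ ball S q) : a * b ∈ ball S (p + q) := by
  rw [ball_eq_wordSet] at *
  exact mul_mem_wordSet ha hb

lemma single_mem_ball {S : Set G} {x : G} (hx : x ∈ S ∨ x⁻¹ ∈ S) : x ∈ ball S 1 := by
  rw [ball_eq_wordSet]
  refine single_mem_wordSet ?_
  rcases hx with h | h
  · exact Or.inl h
  · exact Or.inr (by simpa [Set.mem_inv] using h)

lemma ball_mono (S : Set G) {m n : ℕ} (h : m ≤ n) : ball S m ⊆ ball S n := by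
  rw [ball_eq_wordSet, ball_eq_wordSet]
  exact wordSet_mono _ h



/-- conjugated letter -/
def cj (t : G) (p : ℤ × G) : G := t ^ p.1 * p.2 * t ^ (-p.1)

/-- product of conjugated letters -/
def cprod (t : G) (L : List (ℤ × G)) : G := (L.map (cj t)).prod

@[simp] lemma cprod_nil (t : G) : cprod t [] = 1 := rfl

lemma cprod_cons (t : G) (p : ℤ × G) (L : List (ℤ × G)) :
    cprod t (p :: L) = cj t p * cprod t L := by
  simp [cprod]

lemma cprod_append (t : G) (L L' : List (ℤ × G)) :
    cprod t (L ++ L') = cprod t L * cprod t L' := by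
  simp [cprod]

lemma cprod_shift (t : G) (d : ℤ) (L : List (ℤ × G)) :
    cprod t (L.map (fun p => (p.1 + d, p.2))) = t ^ d * cprod t L * t ^ (-d) := by
  induction L with
  | nil => simp
  | cons p L ih =>
      rw [List.map_cons, cprod_cons, cprod_cons, ih, cj, cj]
      group

lemma cprod_inv (t : G) (L : List (ℤ × G)) :
    (cprod t L)⁻¹ = cprod t (L.reverse.map (fun p => (p.1, p.2⁻¹))) := by
  induction L with
  | nil => simp
  | cons p L ih =>
      rw [cprod_cons, mul_inv_rev, ih]
      rw [List.reverse_cons, List.map_append, cprod_append]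
      simp [cprod, cj, mul_assoc]

lemma cj_mem_subgroup {A : Subgroup G} (hN : A.Normal) {t : G} {p : ℤ × G}
    (hp : p.2 ∈ A) : cj t p ∈ A := by
  simpa [cj, mul_assoc, zpow_neg] using hN.conj_mem p.2 hp (t ^ p.1)

lemma cprod_mem_subgroup {A : Subgroup G} (hN : A.Normal) {t : G} {L : List (ℤ × G)}
    (hL : ∀ p ∈ L, p.2 ∈ A) : cprod t L ∈ A := by
  refine list_prod_mem ?_
  intro x hx
  obtain ⟨p, hp, rfl⟩ := List.mem_map.1 hx
  exact cj_mem_subgroup hN (hL p hp)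

section RL
variable {A : Subgroup G} (hN : A.Normal) (hab : ∀ a ∈ A, ∀ b ∈ A, a * b = b * a)
  {t : G} {S : Set G} (htS : t ∈ S)

include hN hab in
lemma pairwise_commute_cj {L : List (ℤ × G)} (hL : ∀ p ∈ L, p.2 ∈ A) :
    (L.map (cj t)).Pairwise Commute := by
  refine List.pairwise_of_forall_mem_list ?_
  intro a ha b hb
  obtain ⟨p, hp, rfl⟩ := List.mem_map.1 ha
  obtain ⟨q, hq, rfl⟩ := List.mem_map.1 hb
  exact hab _ (cj_mem_subgroup hN (hL p hp)) _ (cj_mem_subgroup hN (hL q hq))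

lemma letters_prod_mem_ball {L : List (ℤ × G)} (hL : ∀ p ∈ L, p.2 ∈ S ∨ p.2⁻¹ ∈ S) :
    (L.map Prod.snd).prod ∈ ball S L.length := by
  refine ⟨L.map Prod.snd, by simp, ?_, rfl⟩
  intro y hy
  obtain ⟨p, hp, rfl⟩ := List.mem_map.1 hy
  exact hL p hp

include hN hab htS in
lemma rlb : ∀ (fuel : ℕ) (c j : ℤ) (L : List (ℤ × G)) (n : ℕ),
    c ≤ fuel → 0 ≤ j → j ≤ c →
    (∀ p ∈ L, p.2 ∈ A ∧ (p.2 ∈ S ∨ p.2⁻¹ ∈ S) ∧ 0 ≤ p.1 ∧ p.1 ≤ c) →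
    (L.length : ℤ) + 2 * c - j ≤ (n : ℤ) →
    cprod t L * t ^ j ∈ ball S n := by
  intro fuel
  induction fuel with
  | zero =>
      intro c j L n hc hj0 hjc hL hn
      have hc0 : c = 0 := by omega
      have hj : j = 0 := by omega
      subst hc0 hj
      have hmap : L.map (cj t) = L.map Prod.snd := by
        refine List.map_congr_left ?_
        intro p hp
        have h1 : p.1 = 0 := by have := (hL p hp).2.2; omega
        simp [cj, h1]
      have : cprod t L = (L.map Prod.snd).prod := by rw [cprod, hmap]
      rw [this, zpow_zero, mul_one]
      refine ball_mono S (by omega : L.length ≤ n) (letters_prod_mem_ball (fun p hp => (hL p hp).2.1))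
  | succ fuel ih =>
      intro c j L n hc hj0 hjc hL hn
      by_cases hc0 : c ≤ 0
      · -- same as base case
        have hc' : c = 0 := by omega
        have hj : j = 0 := by omega
        subst hc' hj
        have hmap : L.map (cj t) = L.map Prod.snd := by
          refine List.map_congr_left ?_
          intro p hp
          have h1 : p.1 = 0 := by have := (hL p hp).2.2; omega
          simp [cj, h1]
        have : cprod t L = (L.map Prod.snd).prod := by rw [cprod, hmap]
        rw [this, zpow_zero, mul_one]
        exact ball_mono S (by omega : L.length ≤ n) (letters_prod_mem_ball (fun p hp => (hL p hp).2.1))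
      · push_neg at hc0
        set f : ℤ × G → Bool := fun p => decide (p.1 = 0) with hf
        set L₀ := L.filter f with hL₀
        set L₁ := L.filter (fun p => !f p) with hL₁
        have hperm : (L₀ ++ L₁).Perm L := List.filter_append_perm f L
        have hlen : L₀.length + L₁.length = L.length := by
          have := hperm.length_eq; simpa using this
        have hmem₀ : ∀ p ∈ L₀, p ∈ L := fun p hp => List.mem_of_mem_filter hp
        have hmem₁ : ∀ p ∈ L₁, p ∈ L := fun p hp => List.mem_of_mem_filter hp
        have h₀zero : ∀ p ∈ L₀, p.1 = 0 := by
          intro p hp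
          have := (List.mem_filter.1 hp).2
          simpa [hf] using this
        have h₁ne : ∀ p ∈ L₁, p.1 ≠ 0 := by
          intro p hp
          have := (List.mem_filter.1 hp).2
          simpa [hf] using this
        have hprodeq : cprod t L = cprod t L₀ * cprod t L₁ := by
          have hpc : ((L₀ ++ L₁).map (cj t)).Pairwise Commute := by
            refine pairwise_commute_cj hN hab ?_
            intro p hp
            rcases List.mem_append.1 hp with h | h
            · exact (hL p (hmem₀ p h)).1
            · exact (hL p (hmem₁ p h)).1
          have := (hperm.map (cj t)).prod_eq' hpc
          rw [cprod, ← this, List.map_append, List.prod_append, ← cprod, ← cprod]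
        have hP₀ : cprod t L₀ = (L₀.map Prod.snd).prod := by
          rw [cprod]
          congr 1
          refine List.map_congr_left ?_
          intro p hp
          simp [cj, h₀zero p hp]
        set L₁' := L₁.map (fun p => (p.1 - 1, p.2)) with hL₁'
        have hshape : cprod t L₁ = t * cprod t L₁' * t⁻¹ := by
          have h1 : L₁'.map (fun p => (p.1 + 1, p.2)) = L₁ := by
            rw [hL₁', List.map_map]
            have : ∀ p ∈ L₁, ((fun p : ℤ × G => (p.1 + 1, p.2)) ∘ fun p : ℤ × G => (p.1 - 1, p.2)) p = id p := by
              intro p hp; simp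
            rw [List.map_congr_left this, List.map_id]
          have := cprod_shift t 1 L₁'
          rw [h1] at this
          rw [this, zpow_one]
          norm_num
        have hL₁'mem : ∀ p ∈ L₁', p.2 ∈ A ∧ (p.2 ∈ S ∨ p.2⁻¹ ∈ S) ∧ 0 ≤ p.1 ∧ p.1 ≤ c - 1 := by
          intro p hp
          obtain ⟨q, hq, rfl⟩ := List.mem_map.1 hp
          have h1 := hL q (hmem₁ q hq)
          have h2 := h₁ne q hq
          exact ⟨h1.1, h1.2.1, by omega, by omega⟩
        have hlen₁' : L₁'.length = L₁.length := by simp [hL₁']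
        have hP₀mem : (L₀.map Prod.snd).prod ∈ ball S L₀.length :=
          letters_prod_mem_ball (fun p hp => (hL p (hmem₀ p hp)).2.1)
        have htmem : t ∈ ball S 1 := single_mem_ball (Or.inl htS)
        have htinvmem : t⁻¹ ∈ ball S 1 := single_mem_ball (Or.inr (by simpa using htS))
        by_cases hj1 : 1 ≤ j
        · -- ascend
          have hσn : L₀.length + 1 ≤ n := by omega
          set n' : ℕ := n - (L₀.length + 1) with hn'
          have hn'z : (n' : ℤ) = (n : ℤ) - L₀.length - 1 := by omega
          have hih : cprod t L₁' * t ^ (j - 1) ∈ ball S n' := by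
            refine ih (c - 1) (j - 1) L₁' n' (by omega) (by omega) (by omega) hL₁'mem ?_
            omega
          have heq : cprod t L * t ^ j =
              (L₀.map Prod.snd).prod * t * (cprod t L₁' * t ^ (j - 1)) := by
            rw [hprodeq, hP₀, hshape]
            group
          rw [heq]
          have := mul_mem_ball (mul_mem_ball hP₀mem htmem) hih
          exact ball_mono S (by omega) this
        · -- j = 0, ascend and come back
          have hj' : j = 0 := by omega
          subst hj'
          have hσn : L₀.length + 2 ≤ n := by omega
          set n' : ℕ := n - (L₀.length + 2) with hn'
          have hih : cprod t L₁' * t ^ (0 : ℤ) ∈ ball S n' := by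
            refine ih (c - 1) 0 L₁' n' (by omega) le_rfl (by omega) hL₁'mem ?_
            omega
          have heq : cprod t L * t ^ (0 : ℤ) =
              (L₀.map Prod.snd).prod * t * (cprod t L₁' * t ^ (0 : ℤ)) * t⁻¹ := by
            rw [hprodeq, hP₀, hshape]
            group
          rw [heq]
          have := mul_mem_ball (mul_mem_ball (mul_mem_ball hP₀mem htmem) hih) htinvmem
          exact ball_mono S (by omega) this


include hN hab htS in
lemma rla : ∀ (dm : ℕ) (c j : ℤ) (L : List (ℤ × G)) (n : ℕ),
    0 ≤ c → 0 ≤ j → j ≤ c →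
    (∀ p ∈ L, p.2 ∈ A ∧ (p.2 ∈ S ∨ p.2⁻¹ ∈ S) ∧ -(dm : ℤ) ≤ p.1 ∧ p.1 ≤ c) →
    (L.length : ℤ) + 2 * c + 2 * dm - j ≤ (n : ℤ) →
    cprod t L * t ^ j ∈ ball S n := by
  intro dm
  induction dm with
  | zero =>
      intro c j L n hc0 hj0 hjc hL hn
      refine rlb hN hab htS c.toNat c j L n (by omega) hj0 hjc ?_ (by omega)
      intro p hp
      obtain ⟨h1, h2, h3, h4⟩ := hL p hp
      exact ⟨h1, h2, by omega, h4⟩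
  | succ dm ih =>
      intro c j L n hc0 hj0 hjc hL hn
      set L' := L.map (fun p => (p.1 + 1, p.2)) with hL'
      have hs : cprod t L' = t ^ (1 : ℤ) * cprod t L * t ^ (-1 : ℤ) := cprod_shift t 1 L
      have heq : cprod t L * t ^ j = t⁻¹ * (cprod t L' * t ^ (j + 1)) := by
        rw [hs]; group
      have hn2 : 2 ≤ n := by omega
      set n' : ℕ := n - 1 with hn'
      have hih : cprod t L' * t ^ (j + 1) ∈ ball S n' := by
        refine ih (c + 1) (j + 1) L' n' (by omega) (by omega) (by omega) ?_ ?_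
        · intro p hp
          obtain ⟨q, hq, rfl⟩ := List.mem_map.1 hp
          obtain ⟨h1, h2, h3, h4⟩ := hL q hq
          exact ⟨h1, h2, by omega, by omega⟩
        · have : L'.length = L.length := by simp [hL']
          omega
      rw [heq]
      have htinvmem : t⁻¹ ∈ ball S 1 := single_mem_ball (Or.inr (by simpa using htS))
      exact ball_mono S (by omega) (mul_mem_ball htinvmem hih)

include hN hab htS in
lemma rl (m M j : ℤ) (L : List (ℤ × G)) (n : ℕ)
    (hm : m ≤ 0) (hM : 0 ≤ M) (hjm : m ≤ j) (hjM : j ≤ M)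
    (hL : ∀ p ∈ L, p.2 ∈ A ∧ (p.2 ∈ S ∨ p.2⁻¹ ∈ S) ∧ m ≤ p.1 ∧ p.1 ≤ M)
    (hn : (L.length : ℤ) + 2 * (M - m) ≤ (n : ℤ)) :
    cprod t L * t ^ j ∈ ball S n := by
  by_cases hj : 0 ≤ j
  · refine rla hN hab htS (-m).toNat M j L n hM hj hjM ?_ (by omega)
    intro p hp
    obtain ⟨h1, h2, h3, h4⟩ := hL p hp
    exact ⟨h1, h2, by omega, h4⟩
  · push_neg at hj
    set K := L.reverse.map (fun p : ℤ × G => (p.1, p.2⁻¹)) with hK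
    set K' := K.map (fun p => (p.1 + (-j), p.2)) with hK'
    have hKmem : ∀ p ∈ K, p.2 ∈ A ∧ (p.2 ∈ S ∨ p.2⁻¹ ∈ S) ∧ m ≤ p.1 ∧ p.1 ≤ M := by
      intro p hp
      obtain ⟨q, hq, rfl⟩ := List.mem_map.1 hp
      obtain ⟨h1, h2, h3, h4⟩ := hL q (List.mem_reverse.1 hq)
      exact ⟨inv_mem h1, by simpa using h2.symm, h3, h4⟩
    have heq : cprod t K' * t ^ (-j) = (cprod t L * t ^ j)⁻¹ := by
      have hs : cprod t K' = t ^ (-j) * cprod t K * t ^ (-(-j)) := cprod_shift t (-j) K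
      rw [hs, mul_inv_rev, ← cprod_inv]
      group
    have hmem : cprod t K' * t ^ (-j) ∈ ball S n := by
      refine rla hN hab htS (j - m).toNat (M - j) (-j) K' n (by omega) (by omega) (by omega) ?_ ?_
      · intro p hp
        obtain ⟨q, hq, rfl⟩ := List.mem_map.1 hp
        obtain ⟨h1, h2, h3, h4⟩ := hKmem q hq
        exact ⟨h1, h2, by omega, by omega⟩
      · have h5 : K'.length = L.length := by simp [hK', hK]
        omega
    rw [heq] at hmem
    simpa using inv_mem_ball hmem

end RL
lemma nf (t : G) (S0 : Set G) :
    ∀ l : List G, (∀ y ∈ l, (y ∈ S0 ∨ y⁻¹ ∈ S0) ∨ y = t ∨ y = t⁻¹) →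
    ∃ (L : List (ℤ × G)) (m M k : ℤ),
      m ≤ 0 ∧ 0 ≤ M ∧ m ≤ k ∧ k ≤ M ∧
      (∀ p ∈ L, (p.2 ∈ S0 ∨ p.2⁻¹ ∈ S0) ∧ m ≤ p.1 ∧ p.1 ≤ M) ∧
      l.prod = cprod t L * t ^ k ∧
      (L.length : ℤ) + 2 * (M - m) ≤ (l.length : ℤ) + k.natAbs := by
  intro l
  induction l with
  | nil =>
      intro _
      exact ⟨[], 0, 0, 0, le_refl _, le_refl _, le_refl _, le_refl _, by simp, by simp [cprod], by simp⟩
  | cons x l' ih =>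
      intro hl
      obtain ⟨L, m, M, k, hm, hM, hmk, hkM, hLmem, hprod, hlen⟩ :=
        ih (fun y hy => hl y (by simp [hy]))
      have hx := hl x (by simp)
      have hstep : (x :: l').prod = x * (cprod t L * t ^ k) := by
        rw [List.prod_cons, hprod]
      rcases hx with hA | hxt | hxinv
      · -- A-letter
        refine ⟨(0, x) :: L, m, M, k, hm, hM, hmk, hkM, ?_, ?_, ?_⟩
        · intro p hp
          rcases List.mem_cons.1 hp with rfl | hp
          · exact ⟨hA, hm, hM⟩
          · exact hLmem p hp
        · rw [hstep, cprod_cons, cj]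
          simp [mul_assoc]
        · simp only [List.length_cons]
          omega
      · -- x = t
        set L' := L.map (fun p : ℤ × G => (p.1 + 1, p.2)) with hL'
        have hshift : cprod t L' = t ^ (1:ℤ) * cprod t L * t ^ (-1:ℤ) := cprod_shift t 1 L
        have hprod' : (x :: l').prod = cprod t L' * t ^ (k + 1) := by
          rw [List.prod_cons, hprod, hxt, hshift]
          group
        have hmem' : ∀ p ∈ L', (p.2 ∈ S0 ∨ p.2⁻¹ ∈ S0) ∧ min (m+1) 0 ≤ p.1 ∧ p.1 ≤ M + 1 := by
          intro p hp
          obtain ⟨q, hq, rfl⟩ := List.mem_map.1 hp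
          obtain ⟨h1, h2, h3⟩ := hLmem q hq
          exact ⟨h1, by omega, by omega⟩
        have hlenL' : L'.length = L.length := by simp [hL']
        refine ⟨L', min (m+1) 0, M + 1, k + 1, by omega, by omega, by omega, by omega,
          hmem', hprod', ?_⟩
        simp only [hlenL', List.length_cons]
        omega
      · -- x = t⁻¹
        subst hxinv
        set L' := L.map (fun p : ℤ × G => (p.1 + (-1), p.2)) with hL'
        have hshift : cprod t L' = t ^ (-1:ℤ) * cprod t L * t ^ (-(-1):ℤ) := cprod_shift t (-1) L
        have hprod' : (t⁻¹ :: l').prod = cprod t L' * t ^ (k - 1) := by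
          rw [hstep, hshift]
          group
        have hmem' : ∀ p ∈ L', (p.2 ∈ S0 ∨ p.2⁻¹ ∈ S0) ∧ m - 1 ≤ p.1 ∧ p.1 ≤ max (M-1) 0 := by
          intro p hp
          obtain ⟨q, hq, rfl⟩ := List.mem_map.1 hp
          obtain ⟨h1, h2, h3⟩ := hLmem q hq
          exact ⟨h1, by omega, by omega⟩
        have hlenL' : L'.length = L.length := by simp [hL']
        refine ⟨L', m - 1, max (M-1) 0, k - 1, by omega, by omega, by omega, by omega,
          hmem', hprod', ?_⟩
        simp only [hlenL', List.length_cons]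
        omega
section Lam
variable [DecidableEq G]

/-- the alphabet of conjugated generators at heights `|e| ≤ w` -/
noncomputable def lam (t : G) (S0 : Finset G) (w : ℕ) : Finset G :=
  ((Finset.Icc (-(w : ℤ)) (w : ℤ)) ×ˢ (S0 ∪ S0.image (fun s => s⁻¹))).image
    (fun p => t ^ p.1 * p.2 * t ^ (-p.1))

lemma mem_lam_iff {t : G} {S0 : Finset G} {w : ℕ} {y : G} :
    y ∈ lam t S0 w ↔ ∃ e : ℤ, ∃ x : G,
      -(w : ℤ) ≤ e ∧ e ≤ w ∧ (x ∈ S0 ∨ x⁻¹ ∈ S0) ∧ y = t ^ e * x * t ^ (-e) := by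
  constructor
  · intro hy
    obtain ⟨⟨e, x⟩, hmem, rfl⟩ := Finset.mem_image.1 hy
    rw [Finset.mem_product] at hmem
    obtain ⟨he, hx⟩ := hmem
    rw [Finset.mem_Icc] at he
    refine ⟨e, x, he.1, he.2, ?_, rfl⟩
    rcases Finset.mem_union.1 hx with h | h
    · exact Or.inl h
    · obtain ⟨z, hz, rfl⟩ := Finset.mem_image.1 h
      exact Or.inr (by simpa using hz)
  · rintro ⟨e, x, he1, he2, hx, rfl⟩
    refine Finset.mem_image.2 ⟨⟨e, x⟩, ?_, rfl⟩
    rw [Finset.mem_product, Finset.mem_Icc]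
    refine ⟨⟨he1, he2⟩, Finset.mem_union.2 ?_⟩
    rcases hx with h | h
    · exact Or.inl h
    · exact Or.inr (Finset.mem_image.2 ⟨x⁻¹, h, by simp⟩)

lemma lam_symm {t : G} {S0 : Finset G} {w : ℕ} {y : G} (hy : y ∈ lam t S0 w) :
    y⁻¹ ∈ lam t S0 w := by
  obtain ⟨e, x, h1, h2, h3, rfl⟩ := mem_lam_iff.1 hy
  refine mem_lam_iff.2 ⟨e, x⁻¹, h1, h2, by simpa using h3.symm, ?_⟩
  simp [mul_assoc]

lemma lam_symm' (t : G) (S0 : Finset G) (w : ℕ) :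
    ∀ y ∈ ((lam t S0 w : Finset G) : Set G), y⁻¹ ∈ ((lam t S0 w : Finset G) : Set G) := by
  intro y hy
  exact lam_symm (by simpa using hy)

lemma lam_sub_A {A : Subgroup G} (hN : A.Normal) {t : G} {S0 : Finset G}
    (hS0 : (S0 : Set G) ⊆ (A : Set G)) {w : ℕ} {y : G} (hy : y ∈ lam t S0 w) : y ∈ A := by
  obtain ⟨e, x, h1, h2, h3, rfl⟩ := mem_lam_iff.1 hy
  have hxA : x ∈ A := by
    rcases h3 with h | h
    · exact hS0 h
    · simpa using A.inv_mem (hS0 h)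
  simpa [mul_assoc, zpow_neg] using hN.conj_mem x hxA (t ^ e)

/-- every product over the alphabet is a `cprod` -/
lemma lam_words {t : G} {S0 : Finset G} {w : ℕ} :
    ∀ l : List G, (∀ y ∈ l, y ∈ lam t S0 w) →
    ∃ L : List (ℤ × G), L.length = l.length ∧
      (∀ p ∈ L, -(w : ℤ) ≤ p.1 ∧ p.1 ≤ w ∧ (p.2 ∈ S0 ∨ p.2⁻¹ ∈ S0)) ∧
      cprod t L = l.prod := by
  intro l
  induction l with
  | nil => exact fun _ => ⟨[], rfl, by simp, by simp [cprod]⟩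
  | cons y l' ih =>
      intro hl
      obtain ⟨L', h1, h2, h3⟩ := ih (fun z hz => hl z (by simp [hz]))
      obtain ⟨e, x, he1, he2, hx, hy⟩ := mem_lam_iff.1 (hl y (by simp))
      refine ⟨(e, x) :: L', by simp [h1], ?_, ?_⟩
      · intro p hp
        rcases List.mem_cons.1 hp with rfl | hp
        · exact ⟨he1, he2, hx⟩
        · exact h2 p hp
      · rw [cprod_cons, h3, List.prod_cons, cj, ← hy]

end Lam

section Key
variable [DecidableEq G] {A : Subgroup G} (hN : A.Normal)
  (hab : ∀ a ∈ A, ∀ b ∈ A, a * b = b * a)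
  {t : G} (ht : ∀ n : ℤ, n ≠ 0 → t ^ n ≠ 1)
  (hdisj : A ⊓ Subgroup.zpowers t = ⊥)
  {S0 : Finset G} (hS0 : (S0 : Set G) ⊆ (A : Set G))

include hN hab ht hdisj hS0 in
lemma key1 (w n : ℕ) {g : G}
    (hg : g ∈ (A : Set G) ∩ ball ((S0 : Set G) ∪ {t}) n) :
    g ∈ wordSet ((lam t S0 w : Finset G) : Set G) n ∨
      ∃ m : ℤ, m ≤ 0 ∧ ∀ i : ℕ, i ≤ w →
        g * t ^ (m + (i : ℤ)) ∈ ball ((S0 : Set G) ∪ {t}) n := by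
  obtain ⟨hgA, l, hlen, hlet, hprod⟩ := hg
  have hlet' : ∀ y ∈ l, (y ∈ (S0 : Set G) ∨ y⁻¹ ∈ (S0 : Set G)) ∨ y = t ∨ y = t⁻¹ := by
    intro y hy
    rcases hlet y hy with h | h
    · rcases h with h | h
      · exact Or.inl (Or.inl h)
      · exact Or.inr (Or.inl h)
    · rcases h with h | h
      · exact Or.inl (Or.inr h)
      · exact Or.inr (Or.inr (by rw [← inv_inv t, ← h]; simp))
  obtain ⟨L, m, M, k, hm, hM, hmk, hkM, hLmem, hprodL, hlenL⟩ := nf t (S0 : Set G) l hlet'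
  have hLA : ∀ p ∈ L, p.2 ∈ A := by
    intro p hp
    rcases (hLmem p hp).1 with h | h
    · exact hS0 h
    · simpa using A.inv_mem (hS0 h)
  have hcA : cprod t L ∈ A := cprod_mem_subgroup hN hLA
  have hk0 : k = 0 := by
    have htk : t ^ k ∈ A := by
      have : t ^ k = (cprod t L)⁻¹ * g := by
        rw [← hprod, hprodL]; group
      rw [this]
      exact A.mul_mem (A.inv_mem hcA) hgA
    have : t ^ k ∈ A ⊓ Subgroup.zpowers t := ⟨htk, ⟨k, rfl⟩⟩
    rw [hdisj] at this
    by_contra hk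
    exact ht k hk (Subgroup.mem_bot.1 this)
  subst hk0
  have hgL : g = cprod t L := by rw [← hprod, hprodL]; simp
  have hbudget : (L.length : ℤ) + 2 * (M - m) ≤ (n : ℤ) := by
    have : (l.length : ℤ) ≤ n := by exact_mod_cast hlen
    simp at hlenL
    omega
  have hSletters : ∀ p ∈ L, p.2 ∈ A ∧
      (p.2 ∈ (S0 : Set G) ∪ {t} ∨ p.2⁻¹ ∈ (S0 : Set G) ∪ {t}) ∧ m ≤ p.1 ∧ p.1 ≤ M := by
    intro p hp
    obtain ⟨h1, h2, h3⟩ := hLmem p hp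
    refine ⟨hLA p hp, ?_, h2, h3⟩
    rcases h1 with h | h
    · exact Or.inl (Or.inl h)
    · exact Or.inr (Or.inl h)
  by_cases hwide : (w : ℤ) ≤ M - m
  · right
    refine ⟨m, hm, fun i hi => ?_⟩
    rw [hgL]
    have htS : t ∈ ((S0 : Set G) ∪ {t}) := Set.mem_union_right _ rfl
    exact rl hN hab htS m M (m + i) L n hm hM (by omega) (by omega) hSletters hbudget
  · left
    refine ⟨L.map (cj t), by simpa using (by omega : L.length ≤ n), ?_, by rw [hgL]; rfl⟩
    · intro y hy
      obtain ⟨p, hp, rfl⟩ := List.mem_map.1 hy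
      obtain ⟨h1, h2, h3⟩ := hLmem p hp
      exact Finset.mem_coe.2 (mem_lam_iff.2 ⟨p.1, p.2, by omega, by omega, h1, rfl⟩)

include hN hab hS0 in
lemma key2 (w q i n : ℕ) (hq : (q : ℤ) + 4 * w + i ≤ (n : ℤ)) {u : G}
    (hu : u ∈ wordSet ((lam t S0 w : Finset G) : Set G) q) :
    u * t ^ (i : ℤ) ∈ ball ((S0 : Set G) ∪ {t}) n := by
  obtain ⟨l, hlen, hmem, rfl⟩ := hu
  obtain ⟨L, hLlen, hLmem, hLprod⟩ := lam_words l (fun y hy => Finset.mem_coe.1 (hmem y hy))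
  rw [← hLprod]
  have htS : t ∈ ((S0 : Set G) ∪ {t}) := Set.mem_union_right _ rfl
  refine rla hN hab htS w (max (w : ℤ) (i : ℤ)) (i : ℤ) L n
    (by omega) (by omega) (by omega) ?_ ?_
  · intro p hp
    obtain ⟨h1, h2, h3⟩ := hLmem p hp
    have hpA : p.2 ∈ A := by
      rcases h3 with h | h
      · exact hS0 h
      · simpa using A.inv_mem (hS0 h)
    refine ⟨hpA, ?_, h1, by omega⟩
    rcases h3 with h | h
    · exact Or.inl (Or.inl h)
    · exact Or.inr (Or.inl h)
  · have : (L.length : ℤ) ≤ q := by rw [hLlen]; exact_mod_cast hlen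
    omega

include hab in
lemma half {w n : ℕ} (hS0 : (S0 : Set G) ⊆ (A : Set G)) (hN : A.Normal) {g : G}
    (hg : g ∈ wordSet ((lam t S0 w : Finset G) : Set G) n) :
    ∃ u ∈ wordSet ((lam t S0 w : Finset G) : Set G) ((n + (lam t S0 w).card) / 2),
    ∃ c ∈ wordSet ((lam t S0 w : Finset G) : Set G) ((lam t S0 w).card),
      g = u ^ 2 * c := by
  classical
  obtain ⟨l, hlen, hmem, rfl⟩ := hg
  letI : CommGroup ↥A :=
    { (inferInstance : Group ↥A) with
      mul_comm := fun a b => Subtype.ext (hab ↑a a.2 ↑b b.2) }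
  set D := (lam t S0 w).card with hD
  set l' : List ↥A := l.attach.map
    (fun y => ⟨y.1, lam_sub_A hN hS0 (Finset.mem_coe.1 (hmem y.1 y.2))⟩) with hl'
  have hl'len : l'.length = l.length := by simp [hl']
  have hl'coe : l'.map Subtype.val = l := by
    rw [hl', List.map_map]
    exact List.attach_map_subtype_val l
  have hl'mem : ∀ x ∈ l', (x : G) ∈ lam t S0 w := by
    intro x hx
    rw [hl'] at hx
    obtain ⟨y, hy, rfl⟩ := List.mem_map.1 hx
    exact Finset.mem_coe.1 (hmem y.1 y.2)
  have hgprod : l.prod = ((l'.prod : ↥A) : G) := by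
    have h := List.prod_hom l' A.subtype
    rw [Subgroup.coe_subtype] at h
    rw [← hl'coe, h]
  set m' : Multiset ↥A := (l' : Multiset ↥A) with hm'
  set F := m'.toFinset with hF
  set f : ↥A → ℕ := fun x => m'.count x with hfdef
  have hFmem : ∀ x ∈ F, (x : G) ∈ lam t S0 w := by
    intro x hx
    exact hl'mem x (by simpa [hm'] using Multiset.mem_toFinset.1 hx)
  have hcard : F.card ≤ D := by
    rw [hD]
    refine Finset.card_le_card_of_injOn (fun x => (x : G)) (fun x hx => hFmem x hx) ?_
    exact Set.injOn_of_injective Subtype.val_injective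
  have hsumf : ∑ x ∈ F, f x ≤ n := by
    have := Multiset.toFinset_sum_count_eq m'
    rw [hF, hfdef]
    rw [this]
    simpa [hm', hl'len] using hlen
  have hprodid : l'.prod = ∏ x ∈ F, x ^ f x := by
    rw [← Multiset.prod_coe l']
    exact Finset.prod_multiset_count m'
  set e : ↥A → ℕ := fun x => 2 * ((f x + 1) / 2) - f x with hedef
  set u' : ↥A := ∏ x ∈ F, x ^ ((f x + 1) / 2) with hu'
  set c' : ↥A := ∏ x ∈ F, x ^ (e x) with hc'
  have hu2 : l'.prod * c' = u' ^ 2 := by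
    rw [hprodid, hu', hc', ← Finset.prod_mul_distrib, ← Finset.prod_pow]
    refine Finset.prod_congr rfl ?_
    intro x _
    rw [← pow_add, ← pow_mul]
    congr 1
    have : f x ≤ 2 * ((f x + 1) / 2) := by omega
    rw [hedef]
    simp only
    omega
  have hdecomp : l'.prod = u' ^ 2 * c'⁻¹ := by
    rw [← hu2]
    group
  -- memberships
  have haux : ∀ (s : Finset ↥A), (∀ x ∈ s, (x : G) ∈ lam t S0 w) → ∀ (k : ↥A → ℕ),
      ((∏ x ∈ s, x ^ k x : ↥A) : G) ∈ wordSet ((lam t S0 w : Finset G) : Set G)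
        (∑ x ∈ s, k x) := by
    intro s
    induction s using Finset.induction_on with
    | empty => intro _ k; simpa using one_mem_wordSet _ 0
    | @insert a s ha ih =>
        intro hmem k
        rw [Finset.prod_insert ha, Finset.sum_insert ha]
        have h1 : ((a ^ k a * ∏ x ∈ s, x ^ k x : ↥A) : G)
            = (a : G) ^ k a * ((∏ x ∈ s, x ^ k x : ↥A) : G) := by push_cast; rfl
        rw [h1]
        exact mul_mem_wordSet
          (pow_mem_wordSet (Finset.mem_coe.2 (hmem a (Finset.mem_insert_self a s))) (k a))
          (ih (fun x hx => hmem x (Finset.mem_insert_of_mem hx)) k)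
  have hu'mem : (u' : G) ∈ wordSet ((lam t S0 w : Finset G) : Set G) ((n + D) / 2) := by
    refine wordSet_mono _ ?_ (haux F hFmem (fun x => (f x + 1) / 2))
    rw [Nat.le_div_iff_mul_le (by norm_num : 0 < 2)]
    calc (∑ x ∈ F, (f x + 1) / 2) * 2 = ∑ x ∈ F, ((f x + 1) / 2 * 2) := by
          rw [Finset.sum_mul]
      _ ≤ ∑ x ∈ F, (f x + 1) := Finset.sum_le_sum (fun x _ => by omega)
      _ = (∑ x ∈ F, f x) + F.card := by rw [Finset.sum_add_distrib, Finset.card_eq_sum_ones]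
      _ ≤ n + D := by omega
  have hc'mem : ((c' : ↥A) : G) ∈ wordSet ((lam t S0 w : Finset G) : Set G) D := by
    refine wordSet_mono _ ?_ (haux F hFmem e)
    calc ∑ x ∈ F, e x ≤ F.card • 1 := Finset.sum_le_card_nsmul F e 1 (fun x _ => by
          rw [hedef]; simp only; omega)
      _ = F.card := by simp
      _ ≤ D := hcard
  refine ⟨(u' : G), hu'mem, ((c' : ↥A) : G)⁻¹,
    inv_mem_wordSet (lam_symm' t S0 w) hc'mem, ?_⟩
  rw [hgprod, hdecomp]
  push_cast
  rfl
end Key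

section Count
variable [DecidableEq G] {A : Subgroup G} (hN : A.Normal)
  (hab : ∀ a ∈ A, ∀ b ∈ A, a * b = b * a)
  {t : G} (ht : ∀ n : ℤ, n ≠ 0 → t ^ n ≠ 1)
  (hdisj : A ⊓ Subgroup.zpowers t = ⊥)
  {S0 : Finset G} (hS0 : (S0 : Set G) ⊆ (A : Set G))

include hN hab ht hdisj hS0 in
/-- cancellation: two coset representatives agree -/
lemma cancel {g g' : G} (hg : g ∈ A) (hg' : g' ∈ A) {a b : ℤ}
    (h : g * t ^ a = g' * t ^ b) : g = g' ∧ a = b := by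
  have e1 : (g')⁻¹ * g = t ^ (b - a) := by
    have h2 : (g')⁻¹ * (g * t ^ a) * (t ^ a)⁻¹ = (g')⁻¹ * (g' * t ^ b) * (t ^ a)⁻¹ := by rw [h]
    calc (g')⁻¹ * g = (g')⁻¹ * (g * t ^ a) * (t ^ a)⁻¹ := by group
      _ = (g')⁻¹ * (g' * t ^ b) * (t ^ a)⁻¹ := h2
      _ = t ^ (b - a) := by group
  have e2 : t ^ (b - a) ∈ A ⊓ Subgroup.zpowers t := by
    constructor
    · rw [← e1]; exact A.mul_mem (A.inv_mem hg') hg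
    · exact ⟨b - a, rfl⟩
  rw [hdisj, Subgroup.mem_bot] at e2
  have hba : b - a = 0 := by
    by_contra hba
    exact ht (b - a) hba e2
  constructor
  · have h3 : (g')⁻¹ * g = 1 := by rw [e1, hba, zpow_zero]
    exact (inv_mul_eq_one.1 h3).symm
  · omega

include hN hab ht hdisj hS0 in
lemma count (w n : ℕ) (hn : 16 * ((lam t S0 w).card + 4 * w + 4) ≤ n) :
    ((((A : Set G) ∩ ball ((S0 : Set G) ∪ {t}) n).ncard : ℝ)) /
        ((ball ((S0 : Set G) ∪ {t}) n).ncard : ℝ) ≤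
      1 / (w + 1) +
        ((wordSet ((lam t S0 w : Finset G) : Set G) ((lam t S0 w).card)).ncard : ℝ) /
          (((n / 4 : ℕ) : ℝ) + 1) := by
  classical
  set S : Set G := (S0 : Set G) ∪ {t} with hSdef
  have hSfin : S.Finite := S0.finite_toSet.union (Set.finite_singleton t)
  have hbfin : (ball S n).Finite := ball_finite hSfin n
  haveI := hbfin.to_subtype
  have hbpos : 0 < (ball S n).ncard := (Set.ncard_pos hbfin).2 ⟨1, one_mem_ball S n⟩
  set D : ℕ := (lam t S0 w).card with hDdef
  set P : ℕ → Set G := fun k => wordSet ((lam t S0 w : Finset G) : Set G) k with hPdef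
  have hPfin : ∀ k, (P k).Finite := fun k => wordSet_finite (lam t S0 w).finite_toSet k
  have hPA : ∀ k, P k ⊆ (A : Set G) := fun k =>
    wordSet_subset_subgroup (fun y hy => lam_sub_A hN hS0 (Finset.mem_coe.1 hy)) k
  set J : ℕ := n / 4 with hJdef
  set q : ℕ := n - (n / 4 + 4 * w) with hqdef
  set X₁ : Set G := ((A : Set G) ∩ ball S n) \ P n with hX₁def
  set X₂ : Set G := ((A : Set G) ∩ ball S n) ∩ P n with hX₂def
  have hX₁fin : X₁.Finite := hbfin.subset (fun g hg => hg.1.2)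
  have hX₂fin : X₂.Finite := hbfin.subset (fun g hg => hg.1.2)
  -- split
  have h4 : ((A : Set G) ∩ ball S n).ncard ≤ X₂.ncard + X₁.ncard := by
    rw [← Set.inter_union_diff ((A : Set G) ∩ ball S n) (P n)]
    exact Set.ncard_union_le _ _
  -- X₁ injection
  have h1 : X₁.ncard * (w + 1) ≤ (ball S n).ncard := by
    have hch : ∀ g : ↥X₁, ∃ m : ℤ, m ≤ 0 ∧ ∀ i : ℕ, i ≤ w →
        (g : G) * t ^ (m + (i : ℤ)) ∈ ball S n := by
      intro g
      rcases key1 hN hab ht hdisj hS0 w n g.2.1 with h | h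
      · exact absurd h g.2.2
      · exact h
    choose σ hσ1 hσ2 using hch
    set Φ : ↥X₁ × Fin (w + 1) → ↥(ball S n) := fun gi =>
      ⟨(gi.1 : G) * t ^ (σ gi.1 + (gi.2 : ℤ)), hσ2 gi.1 gi.2 (Nat.lt_succ_iff.1 gi.2.isLt)⟩
      with hΦdef
    have hinj : Function.Injective Φ := by
      rintro ⟨g, i⟩ ⟨g', i'⟩ hh
      have h' : (g : G) * t ^ (σ g + (i : ℤ)) = (g' : G) * t ^ (σ g' + (i' : ℤ)) := by
        simpa [hΦdef, Subtype.ext_iff] using hh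
      obtain ⟨hgg, hab'⟩ := cancel hN hab ht hdisj hS0 g.2.1.1 g'.2.1.1 h'
      have hg : g = g' := Subtype.ext hgg
      subst hg
      have : (i : ℤ) = (i' : ℤ) := by omega
      have : (i : Fin (w+1)) = i' := Fin.ext (by exact_mod_cast this)
      simp [this]
    calc X₁.ncard * (w + 1)
        = Nat.card (↥X₁ × Fin (w + 1)) := by
          rw [Nat.card_prod, Nat.card_coe_set_eq, Nat.card_eq_fintype_card, Fintype.card_fin]
      _ ≤ Nat.card ↥(ball S n) := Nat.card_le_card_of_injective Φ hinj
      _ = (ball S n).ncard := Nat.card_coe_set_eq _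
  -- P q injection
  have h2 : (P q).ncard * (J + 1) ≤ (ball S n).ncard := by
    have hmem : ∀ (u : ↥(P q)) (i : Fin (J + 1)), (u : G) * t ^ ((i : ℕ) : ℤ) ∈ ball S n := by
      intro u i
      refine key2 hN hab hS0 w q i n ?_ u.2
      have hi : (i : ℕ) ≤ J := Nat.lt_succ_iff.1 i.isLt
      omega
    set Φ : ↥(P q) × Fin (J + 1) → ↥(ball S n) := fun ui =>
      ⟨(ui.1 : G) * t ^ ((ui.2 : ℕ) : ℤ), hmem ui.1 ui.2⟩ with hΦdef
    have hinj : Function.Injective Φ := by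
      rintro ⟨u, i⟩ ⟨u', i'⟩ hh
      have h' : (u : G) * t ^ ((i : ℕ) : ℤ) = (u' : G) * t ^ ((i' : ℕ) : ℤ) := by
        simpa [hΦdef, Subtype.ext_iff] using hh
      obtain ⟨huu, hii⟩ := cancel hN hab ht hdisj hS0 (hPA q u.2) (hPA q u'.2) h'
      have hu : u = u' := Subtype.ext huu
      subst hu
      have : (i : ℕ) = (i' : ℕ) := by exact_mod_cast hii
      simp [Fin.ext this]
    calc (P q).ncard * (J + 1)
        = Nat.card (↥(P q) × Fin (J + 1)) := by
          rw [Nat.card_prod, Nat.card_coe_set_eq, Nat.card_eq_fintype_card, Fintype.card_fin]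
      _ ≤ Nat.card ↥(ball S n) := Nat.card_le_card_of_injective Φ hinj
      _ = (ball S n).ncard := Nat.card_coe_set_eq _
  -- halving
  have h3 : (P n).ncard ≤ (P q).ncard * (P D).ncard := by
    have hsub : P n ⊆ ↑(Finset.image₂ (fun u c => u ^ 2 * c)
        ((hPfin ((n + D) / 2)).toFinset) ((hPfin D).toFinset)) := by
      intro g hg
      obtain ⟨u, hu, c, hc, rfl⟩ := half hab hS0 hN hg
      exact Finset.mem_coe.2 (Finset.mem_image₂.2
        ⟨u, (hPfin _).mem_toFinset.2 hu, c, (hPfin _).mem_toFinset.2 hc, rfl⟩)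
    calc (P n).ncard ≤ (Finset.image₂ (fun u c => u ^ 2 * c)
          ((hPfin ((n + D) / 2)).toFinset) ((hPfin D).toFinset)).card := by
          rw [← Set.ncard_coe_finset]
          exact Set.ncard_le_ncard hsub (Finset.finite_toSet _)
      _ ≤ ((hPfin ((n + D) / 2)).toFinset).card * ((hPfin D).toFinset).card :=
          Finset.card_image₂_le _ _ _
      _ = (P ((n + D) / 2)).ncard * (P D).ncard := by
          rw [Set.ncard_eq_toFinset_card _ (hPfin ((n + D) / 2)),
            Set.ncard_eq_toFinset_card _ (hPfin D)]
      _ ≤ (P q).ncard * (P D).ncard := by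
          refine Nat.mul_le_mul_right _ ?_
          refine Set.ncard_le_ncard (wordSet_mono _ ?_) (hPfin q)
          omega
  have h5 : X₂.ncard ≤ (P n).ncard := Set.ncard_le_ncard (fun g hg => hg.2) (hPfin n)
  -- real arithmetic
  have hbR : (0 : ℝ) < ((ball S n).ncard : ℝ) := by exact_mod_cast hbpos
  have hwR : (0 : ℝ) < (w : ℝ) + 1 := by positivity
  have hJR : (0 : ℝ) < ((J : ℕ) : ℝ) + 1 := by positivity
  have hb1 : (X₁.ncard : ℝ) / ((ball S n).ncard : ℝ) ≤ 1 / ((w : ℝ) + 1) := by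
    rw [div_le_div_iff₀ hbR hwR]
    have : (X₁.ncard : ℝ) * ((w : ℝ) + 1) ≤ ((ball S n).ncard : ℝ) := by
      exact_mod_cast h1
    linarith
  have hb2 : (X₂.ncard : ℝ) / ((ball S n).ncard : ℝ) ≤
      ((P D).ncard : ℝ) / (((J : ℕ) : ℝ) + 1) := by
    rw [div_le_div_iff₀ hbR hJR]
    have hnat : X₂.ncard * (J + 1) ≤ (P D).ncard * (ball S n).ncard := by
      calc X₂.ncard * (J + 1) ≤ ((P q).ncard * (P D).ncard) * (J + 1) :=
            Nat.mul_le_mul_right _ (h5.trans h3)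
        _ = (P D).ncard * ((P q).ncard * (J + 1)) := by ring
        _ ≤ (P D).ncard * (ball S n).ncard := Nat.mul_le_mul_left _ h2
    have : (X₂.ncard : ℝ) * (((J : ℕ) : ℝ) + 1) ≤
        ((P D).ncard : ℝ) * ((ball S n).ncard : ℝ) := by exact_mod_cast hnat
    linarith
  have hsplitR : ((((A : Set G) ∩ ball S n).ncard : ℝ)) / ((ball S n).ncard : ℝ) ≤
      (X₂.ncard : ℝ) / ((ball S n).ncard : ℝ) + (X₁.ncard : ℝ) / ((ball S n).ncard : ℝ) := by
    rw [← add_div]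
    exact div_le_div_of_nonneg_right (by exact_mod_cast h4) hbR.le
  calc ((((A : Set G) ∩ ball S n).ncard : ℝ)) / ((ball S n).ncard : ℝ)
      ≤ (X₂.ncard : ℝ) / ((ball S n).ncard : ℝ) + (X₁.ncard : ℝ) / ((ball S n).ncard : ℝ) :=
        hsplitR
    _ ≤ ((P D).ncard : ℝ) / (((J : ℕ) : ℝ) + 1) + 1 / ((w : ℝ) + 1) := add_le_add hb2 hb1
    _ = 1 / ((w : ℝ) + 1) + ((P D).ncard : ℝ) / (((J : ℕ) : ℝ) + 1) := by ring
end Count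

end Stmt18Aux

open Stmt18Aux in
/-- Let `G = A ⋊ ⟨t⟩` be finitely generated with `A` abelian and `⟨t⟩ ≅ ℤ`.
Then `A` has density `dens_S(A) = 0` in `G` with respect to any finite
generating set of the form `S = S₀ ∪ {t}` with `S₀ ⊆ A`. -/
theorem stmt18 {G : Type*} [Group G] (A : Subgroup G) (hAnorm : A.Normal)
    (hAab : ∀ a ∈ A, ∀ b ∈ A, a * b = b * a)
    (t : G) (ht : ∀ n : ℤ, n ≠ 0 → t ^ n ≠ 1)
    (hsplit : ∀ g : G, ∃ a ∈ A, ∃ k : ℤ, g = a * t ^ k)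
    (hdisj : A ⊓ Subgroup.zpowers t = ⊥)
    (S0 : Finset G) (hS0 : (S0 : Set G) ⊆ (A : Set G))
    (hgen : Subgroup.closure ((S0 : Set G) ∪ {t}) = ⊤) :
    limsup (fun n : ℕ =>
      (((A : Set G) ∩ ball ((S0 : Set G) ∪ {t}) n).ncard : ℝ) /
        ((ball ((S0 : Set G) ∪ {t}) n).ncard : ℝ))
      atTop = 0 := by
  classical
  set f : ℕ → ℝ := fun n =>
    (((A : Set G) ∩ ball ((S0 : Set G) ∪ {t}) n).ncard : ℝ) /
      ((ball ((S0 : Set G) ∪ {t}) n).ncard : ℝ) with hfdef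
  have hf0 : ∀ n, 0 ≤ f n := fun n => div_nonneg (Nat.cast_nonneg _) (Nat.cast_nonneg _)
  have htend : Tendsto f atTop (nhds 0) := by
    rw [Metric.tendsto_atTop]
    intro ε hε
    obtain ⟨w, hw⟩ := exists_nat_gt (2 / ε)
    have hw0 : (0 : ℝ) < (w : ℝ) + 1 := by positivity
    have hwε : 1 / ((w : ℝ) + 1) < ε / 2 := by
      rw [div_lt_iff₀ hw0]
      have h1 : 2 / ε < (w : ℝ) := hw
      have h2 : 2 < ε * (w : ℝ) := by
        rw [div_lt_iff₀ hε] at h1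
        linarith
      nlinarith
    set C : ℕ := (wordSet ((lam t S0 w : Finset G) : Set G) ((lam t S0 w).card)).ncard
      with hCdef
    obtain ⟨K, hK⟩ := exists_nat_gt ((C : ℝ) * 2 / ε)
    set N : ℕ := max (16 * ((lam t S0 w).card + 4 * w + 4)) (4 * K + 4) with hNdef
    refine ⟨N, fun n hn => ?_⟩
    have hcount := count hAnorm hAab ht hdisj hS0 w n
      (le_trans (le_max_left _ _) hn)
    have hn4 : K + 1 ≤ n / 4 := by
      have : 4 * K + 4 ≤ n := le_trans (le_max_right _ _) hn
      omega
    have hJK : (K : ℝ) + 1 ≤ ((n / 4 : ℕ) : ℝ) + 1 := by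
      have : ((K : ℕ) : ℝ) + 1 ≤ ((n / 4 : ℕ) : ℝ) := by exact_mod_cast hn4
      linarith
    have hKpos : (0 : ℝ) < (K : ℝ) + 1 := by positivity
    have hJpos : (0 : ℝ) < ((n / 4 : ℕ) : ℝ) + 1 := by positivity
    have hCJ : (C : ℝ) / (((n / 4 : ℕ) : ℝ) + 1) < ε / 2 := by
      have hstep : (C : ℝ) / (((n / 4 : ℕ) : ℝ) + 1) ≤ (C : ℝ) / ((K : ℝ) + 1) :=
        div_le_div_of_nonneg_left (Nat.cast_nonneg _) hKpos hJK
      refine lt_of_le_of_lt hstep ?_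
      rw [div_lt_iff₀ hKpos]
      have h2 : (C : ℝ) * 2 < ε * ((K : ℝ)) := by
        rw [div_lt_iff₀ hε] at hK
        linarith
      nlinarith
    rw [Real.dist_eq, sub_zero, abs_of_nonneg (hf0 n)]
    calc f n ≤ 1 / ((w : ℝ) + 1) +
        (C : ℝ) / (((n / 4 : ℕ) : ℝ) + 1) := hcount
      _ < ε / 2 + ε / 2 := add_lt_add hwε hCJ
      _ = ε := by ring
  exact htend.limsup_eq
end
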